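/- arXiv:math/0009250 — 3 statements merged into one kernel-verified Lean document; each statement's English description precedes it below -/
import Mathlib

section
/- Let X be a Banach space with separable dual, ε > 0, and (f_i)_{i=1}^∞ ⊆ B_{X*} a weak* null sequence with ε/2 ≤ ‖f_i‖ ≤ 1 for all i. Then there exist a subsequence (f'_i) of (f_i) and a weakly null sequence (x_i) in the unit sphere of X such that f'_i(x_i) ≥ ε/5, |f'_i(x_j)| < ε/2^{i+6} whenever i ≠ j, and (x_i)_{i=1}^k is (1 + ε(1 − 2^{−k}))-basic for every k ≥ 1. -/
open Filter

variable {X : Type*} [NormedAddCommGroup X] [NormedSpace ℝ X]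

/-- The first `k` terms of a sequence are `C`-basic. -/
def IsBasicUpTo (C : ℝ) (x : ℕ → X) (k : ℕ) : Prop :=
  ∀ (a : ℕ → ℝ) (p q : ℕ), p ≤ q → q ≤ k →
    ‖∑ i ∈ Finset.range p, a i • x i‖ ≤ C * ‖∑ i ∈ Finset.range q, a i • x i‖


open Metric NormedSpace in
lemma myDependentChoice {α : Type*} [Inhabited α] (Good : ℕ → (ℕ → α) → Prop)
    (h0 : Good 0 (fun _ => default))
    (hcoh : ∀ i p q, (∀ j < i, p j = q j) → Good i p → Good i q)
    (hext : ∀ i p, Good i p → ∃ v, Good (i+1) (Function.update p i v)) :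
    ∃ p, ∀ i, Good i p := by
  let H : (i : ℕ) → {p : ℕ → α // Good i p} :=
    fun i => Nat.rec ⟨fun _ => default, h0⟩
      (fun i ih => ⟨Function.update ih.1 i (hext i ih.1 ih.2).choose,
        (hext i ih.1 ih.2).choose_spec⟩) i
  have hstep : ∀ i, (H (i+1)).1 = Function.update (H i).1 i
      (hext i (H i).1 (H i).2).choose := fun i => rfl
  refine ⟨fun j => (H (j+1)).1 j, fun i => ?_⟩
  have key : ∀ i, ∀ j < i, (H i).1 j = (H (j+1)).1 j := by
    intro i
    induction i with
    | zero => intro j hj; omega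
    | succ i ih =>
      intro j hj
      rcases Nat.lt_succ_iff_lt_or_eq.mp hj with h | h
      · rw [hstep i, Function.update_of_ne (by omega)]
        exact ih j h
      · subst h; rfl
  exact hcoh i (H i).1 _ (fun j hj => key i j hj) (H i).2

set_option maxHeartbeats 1000000 in
open Metric NormedSpace in
lemma normingNet [CompleteSpace X] (E : Submodule ℝ X) [FiniteDimensional ℝ E] {c : ℝ} (hc : 1 < c) :
    ∃ (F : Finset (StrongDual ℝ X)) (η : ℝ), 0 < η ∧ (∀ h ∈ F, ‖h‖ ≤ 1) ∧
      ∀ z : X, ‖z‖ = 1 → (∀ h ∈ F, |h z| ≤ η) →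
        ∀ u ∈ E, ∀ t : ℝ, ‖u‖ ≤ c * ‖u + t • z‖ := by
  classical
  set s : ℝ := min (1/4) ((c-1)/8) with hs_def
  have hs : 0 < s := lt_min (by norm_num) (by linarith)
  have hs1 : s ≤ 1/4 := min_le_left _ _
  have hs2 : s ≤ (c-1)/8 := min_le_right _ _
  set r : ℝ := s/4 with hr_def
  have hr : 0 < r := by positivity
  have hcomp : IsCompact (sphere (0:E) 1) := isCompact_sphere 0 1
  obtain ⟨T, hT⟩ := hcomp.elim_finite_subcover
    (fun v : sphere (0:E) 1 => ball (v : E) r) (fun v => isOpen_ball)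
    (fun v hv => Set.mem_iUnion.mpr ⟨⟨v, hv⟩, mem_ball_self hr⟩)
  have hdual : ∀ v : sphere (0:E) 1, ∃ h : StrongDual ℝ X, ‖h‖ = 1 ∧ h ((v:E):X) = 1 := by
    intro v
    have hv1 : ‖(v:E)‖ = 1 := by
      have := v.2; rwa [mem_sphere_iff_norm, sub_zero] at this
    have hvx : ‖((v:E):X)‖ = 1 := hv1
    have hne : ((v:E):X) ≠ 0 := by
      intro h; rw [h] at hvx; simp at hvx
    obtain ⟨g, hg1, hg2⟩ := exists_dual_vector ℝ ((v:E):X) (norm_ne_zero_iff.mpr hne)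
    refine ⟨g, hg1, ?_⟩
    rw [hg2, hvx]; norm_num
  choose hf hf1 hf2 using hdual
  refine ⟨T.image hf, s, hs, ?_, ?_⟩
  · intro h hh
    simp only [Finset.mem_image] at hh
    obtain ⟨v, _, rfl⟩ := hh
    exact (hf1 v).le
  intro z hz1 hz2 u hu t
  by_cases hu0 : u = 0
  · subst hu0; simp only [norm_zero]; positivity
  have hnorm : ∃ h ∈ T.image hf, ‖u‖ ≤ (1+s) * |h u| := by
    have hunorm : 0 < ‖u‖ := norm_pos_iff.mpr hu0
    set w : E := ‖u‖⁻¹ • (⟨u, hu⟩ : E) with hw_def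
    have hwnorm : ‖w‖ = 1 := by
      rw [hw_def, norm_smul, norm_inv, norm_norm]
      rw [show ‖(⟨u, hu⟩ : E)‖ = ‖u‖ from rfl]
      field_simp
    have hwS : w ∈ sphere (0:E) 1 := by
      rw [mem_sphere_iff_norm, sub_zero]; exact hwnorm
    obtain ⟨v, hvT, hvw⟩ := Set.mem_iUnion₂.mp (hT hwS)
    have hdist : ‖w - (v:E)‖ < r := by
      rw [← dist_eq_norm]; exact mem_ball.mp hvw
    refine ⟨hf v, Finset.mem_image_of_mem hf hvT, ?_⟩
    have hsplit : hf v ((w:E):X) = hf v (((v:E):X)) + hf v (((w - (v:E) : E) : X)) := by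
      rw [← map_add]; congr 1; push_cast; abel
    have hsmall : |hf v (((w - (v:E) : E) : X))| ≤ r := by
      have hnc : ‖(((w - (v:E) : E)) : X)‖ = ‖w - (v:E)‖ := rfl
      calc |hf v (((w - (v:E) : E) : X))| ≤ ‖hf v‖ * ‖(((w - (v:E) : E)) : X)‖ :=
            (hf v).le_opNorm _
        _ ≤ 1 * r := by rw [hf1 v, hnc]; linarith [hdist]
        _ = r := one_mul r
    have h1 : hf v ((w:E):X) ≥ 1 - r := by
      rw [hsplit, hf2 v]
      have := abs_le.mp hsmall
      linarith [this.1]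
    have hwx : ((w:E):X) = ‖u‖⁻¹ • u := by rw [hw_def]; push_cast; rfl
    have h2 : hf v u = ‖u‖ * hf v ((w:E):X) := by
      rw [hwx, map_smul, smul_eq_mul]
      field_simp
    have h3 : (1 - r) * ‖u‖ ≤ |hf v u| := by
      rw [h2, abs_mul, abs_norm]
      nlinarith [abs_nonneg (hf v ((w:E):X)), le_abs_self (hf v ((w:E):X)), h1]
    have h4 := mul_le_mul_of_nonneg_left h3 (show (0:ℝ) ≤ 1+s by linarith)
    have h5 : 1 ≤ (1+s)*(1-r) := by
      rw [hr_def]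
      nlinarith [mul_le_mul_of_nonneg_left hs1 hs.le, hs]
    have h6 := mul_le_mul_of_nonneg_right h5 (norm_nonneg u)
    nlinarith [h4, h6]
  obtain ⟨h, hhF, hhu⟩ := hnorm
  have hη := hz2 h hhF
  have hh1 : ∀ w : X, |h w| ≤ ‖w‖ := by
    intro w
    have hn : ‖h‖ ≤ 1 := by
      simp only [Finset.mem_image] at hhF
      obtain ⟨v, _, rfl⟩ := hhF
      exact (hf1 v).le
    calc |h w| ≤ ‖h‖ * ‖w‖ := h.le_opNorm w
      _ ≤ 1 * ‖w‖ := mul_le_mul_of_nonneg_right hn (norm_nonneg w)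
      _ = ‖w‖ := one_mul _
  have expand : h (u + t • z) = h u + t * h z := by
    rw [map_add, map_smul, smul_eq_mul]
  have key1 : |h u| ≤ ‖u + t • z‖ + |t| * s := by
    have e2 : h u = h (u + t • z) - t * h z := by rw [expand]; ring
    rw [e2]
    have habs : |h (u + t • z) - t * h z| ≤ |h (u + t • z)| + |t * h z| := abs_sub _ _
    have h4 := hh1 (u + t • z)
    have h5 : |t * h z| = |t| * |h z| := abs_mul t _
    nlinarith [abs_nonneg t, hη, abs_nonneg (h z)]
  have key2 : |t| ≤ ‖u + t • z‖ + ‖u‖ := by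
    have e3 : |t| = ‖t • z‖ := by rw [norm_smul, hz1, mul_one, Real.norm_eq_abs]
    rw [e3]
    calc ‖t • z‖ = ‖(u + t • z) - u‖ := by congr 1; abel
      _ ≤ ‖u + t • z‖ + ‖u‖ := norm_sub_le _ _
  set A := ‖u‖ with hA_def
  set B := ‖u + t • z‖ with hB_def
  have hA : 0 ≤ A := norm_nonneg _
  have hB : 0 ≤ B := norm_nonneg _
  have hts : |t| * s ≤ s * (B + A) := by
    have := mul_le_mul_of_nonneg_right key2 hs.le
    linarith [this]
  have master : A ≤ (1+s) * (B + s * (B + A)) := by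
    calc A ≤ (1+s) * |h u| := hhu
      _ ≤ (1+s) * (B + |t| * s) := by nlinarith [key1]
      _ ≤ (1+s) * (B + s * (B + A)) := by nlinarith [hts]
  have e1 : A * (1 - s - s^2) ≤ (1+s)^2 * B := by nlinarith [master]
  have e2 : (1+s)^2 ≤ (1 + 8*s) * (1 - s - s^2) := by
    nlinarith [hs, hs1, mul_le_mul_of_nonneg_left hs1 hs.le,
      mul_le_mul_of_nonneg_left hs1 (mul_nonneg hs.le hs.le)]
  have e3 : 1 + 8*s ≤ c := by linarith [hs2]
  have pos1 : (0:ℝ) < 1 - s - s^2 := by nlinarith [hs1, hs, mul_le_mul_of_nonneg_left hs1 hs.le]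
  nlinarith [e1, mul_le_mul_of_nonneg_right e2 hB,
    mul_le_mul_of_nonneg_right e3 (mul_nonneg (by linarith : (0:ℝ) ≤ 1-s-s^2) hB), pos1]

open Metric NormedSpace in
lemma diagCauchy [TopologicalSpace.SeparableSpace (StrongDual ℝ X)]
    (y : ℕ → X) (hy : ∀ i, ‖y i‖ ≤ 1) :
    ∃ ψ : ℕ → ℕ, StrictMono ψ ∧ ∀ g : StrongDual ℝ X, CauchySeq (fun i => g (y (ψ i))) := by
  have : Nonempty (StrongDual ℝ X) := ⟨0⟩
  set g : ℕ → StrongDual ℝ X := TopologicalSpace.denseSeq (StrongDual ℝ X) with hg_def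
  have hgd : DenseRange g := TopologicalSpace.denseRange_denseSeq _
  set s : Set (ℕ → ℝ) := Set.univ.pi (fun m => Set.Icc (-‖g m‖) ‖g m‖) with hs_def
  have hscomp : IsCompact s := isCompact_univ_pi (fun m => isCompact_Icc)
  set T : ℕ → (ℕ → ℝ) := fun i m => g m (y i) with hT_def
  have hmem : ∀ i, T i ∈ s := by
    intro i
    rw [hs_def, Set.mem_univ_pi]
    intro m
    rw [Set.mem_Icc, ← abs_le]
    calc |g m (y i)| ≤ ‖g m‖ * ‖y i‖ := (g m).le_opNorm _
      _ ≤ ‖g m‖ * 1 := mul_le_mul_of_nonneg_left (hy i) (norm_nonneg _)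
      _ = ‖g m‖ := mul_one _
  obtain ⟨a, -, ψ, hψ, hconv⟩ := hscomp.isSeqCompact hmem
  have hcoord : ∀ m, Tendsto (fun i => g m (y (ψ i))) atTop (nhds (a m)) := by
    intro m
    exact (tendsto_pi_nhds.mp hconv) m
  refine ⟨ψ, hψ, fun h => ?_⟩
  rw [Metric.cauchySeq_iff]
  intro δ hδ
  obtain ⟨m, hm⟩ := Metric.denseRange_iff.mp hgd h (δ/3) (by linarith)
  obtain ⟨N, hN⟩ := Metric.cauchySeq_iff.mp (hcoord m).cauchySeq (δ/3) (by linarith)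
  refine ⟨N, fun i hi j hj => ?_⟩
  have key : ∀ k, |h (y (ψ k)) - g m (y (ψ k))| ≤ dist h (g m) := by
    intro k
    have he : h (y (ψ k)) - g m (y (ψ k)) = (h - g m) (y (ψ k)) := by
      simp [ContinuousLinearMap.sub_apply]
    rw [he, dist_eq_norm]
    calc |(h - g m) (y (ψ k))| ≤ ‖h - g m‖ * ‖y (ψ k)‖ := (h - g m).le_opNorm _
      _ ≤ ‖h - g m‖ * 1 := mul_le_mul_of_nonneg_left (hy _) (norm_nonneg _)
      _ = ‖h - g m‖ := mul_one _
  have h1 := key i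
  have h2 := key j
  have h3 := hN i hi j hj
  rw [Real.dist_eq] at h3 ⊢
  have habs : |h (y (ψ i)) - h (y (ψ j))| ≤
      |h (y (ψ i)) - g m (y (ψ i))| + |g m (y (ψ i)) - g m (y (ψ j))| +
      |g m (y (ψ j)) - h (y (ψ j))| := by
    calc |h (y (ψ i)) - h (y (ψ j))| = |(h (y (ψ i)) - g m (y (ψ i))) +
        (g m (y (ψ i)) - g m (y (ψ j))) + (g m (y (ψ j)) - h (y (ψ j)))| := by ring_nf
      _ ≤ _ := by
          refine le_trans (abs_add_le _ _) ?_
          gcongr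
          exact abs_add_le _ _
  have h4 : |g m (y (ψ j)) - h (y (ψ j))| = |h (y (ψ j)) - g m (y (ψ j))| := abs_sub_comm _ _
  linarith [habs, h1, h2, h3, hm]

set_option maxHeartbeats 2000000 in
/-- Extraction lemma: given a weak* null sequence `(f_i) ⊆ B_{X*}` with
`ε/2 ≤ ‖f_i‖ ≤ 1` in a space with separable dual, there is a subsequence
`(f'_i) = (f_{φ(i)})` and a weakly null normalized sequence `(x_i)` with
`f'_i(x_i) ≥ ε/5`, `|f'_i(x_j)| < ε/2^{i+6}` for `i ≠ j` (indices starting at 1),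
and `(x_i)_{i=1}^k` being `(1 + ε(1 − 2^{−k}))`-basic for each `k`. -/
theorem exists_subsequence_weaklyNull_biorthogonalish
    [CompleteSpace X] [TopologicalSpace.SeparableSpace (StrongDual ℝ X)]
    (ε : ℝ) (hε : 0 < ε) (f : ℕ → StrongDual ℝ X)
    (hf1 : ∀ i, ‖f i‖ ≤ 1) (hf2 : ∀ i, ε / 2 ≤ ‖f i‖)
    (hwstar : ∀ v : X, Tendsto (fun i => f i v) atTop (nhds 0)) :
    ∃ φ : ℕ → ℕ, StrictMono φ ∧
      ∃ x : ℕ → X, (∀ i, ‖x i‖ = 1) ∧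
        (∀ g : StrongDual ℝ X, Tendsto (fun i => g (x i)) atTop (nhds 0)) ∧
        (∀ i, ε / 5 ≤ f (φ i) (x i)) ∧
        (∀ i j, i ≠ j → |f (φ i) (x j)| < ε / 2 ^ (i + 7)) ∧
        (∀ k : ℕ, 1 ≤ k → IsBasicUpTo (1 + ε * (1 - 1 / 2 ^ k)) x k) := by
  classical
  -- choose almost-norming vectors
  have hy_ex : ∀ i, ∃ y : X, ‖y‖ ≤ 1 ∧ ε/2 - ε/100 ≤ f i y := by
    intro i
    have hlt : ε/2 - ε/100 < ‖f i‖ := lt_of_lt_of_le (by linarith) (hf2 i)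
    obtain ⟨v, hv1, hv2⟩ := (f i).exists_lt_apply_of_lt_opNorm hlt
    rcases le_or_gt 0 (f i v) with hpos | hneg
    · refine ⟨v, hv1.le, ?_⟩
      rw [Real.norm_eq_abs, abs_of_nonneg hpos] at hv2; linarith
    · refine ⟨-v, by simpa using hv1.le, ?_⟩
      rw [map_neg]
      rw [Real.norm_eq_abs, abs_of_neg hneg] at hv2; linarith
  choose y hy1 hy2 using hy_ex
  obtain ⟨ψ, hψ, hcauchy⟩ := diagCauchy y hy1
  set Y : ℕ → X := fun k => y (ψ k) with hY_def
  have hYnorm : ∀ k, ‖Y k‖ ≤ 1 := fun k => hy1 _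
  have hYf : ∀ k, ε/2 - ε/100 ≤ f (ψ k) (Y k) := fun k => hy2 _
  have hwsψ : ∀ v : X, Tendsto (fun k => f (ψ k) v) atTop (nhds 0) :=
    fun v => (hwstar v).comp hψ.tendsto_atTop
  set c₀ : ℝ := ε/2 - ε/50 with hc0_def
  have hc0 : 0 < c₀ := by rw [hc0_def]; linarith
  set C : ℕ → ℝ := fun k => 1 + ε * (1 - 1/2^k) with hC_def
  have hCk : ∀ k, C k = 1 + ε * (1 - 1/2^k) := fun k => rfl
  have hpow1 : ∀ k : ℕ, 1/(2:ℝ)^k ≤ 1 := by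
    intro k
    rw [div_le_one (by positivity)]
    exact one_le_pow₀ (by norm_num)
  have hC1 : ∀ k, 1 ≤ C k := by
    intro k
    have h1 := hpow1 k
    have h2 : 0 ≤ ε * (1 - 1/2^k) := mul_nonneg hε.le (by linarith)
    rw [hCk]; linarith
  have hCpos : ∀ k, 0 < C k := fun k => lt_of_lt_of_le one_pos (hC1 k)
  have hCmono : ∀ p q : ℕ, p ≤ q → C p ≤ C q := by
    intro p q hpq
    have h1 : (1:ℝ)/2^q ≤ 1/2^p := by
      apply one_div_le_one_div_of_le (by positivity)
      exact pow_le_pow_right₀ (by norm_num) hpq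
    have h2 := mul_le_mul_of_nonneg_left h1 hε.le
    rw [hCk, hCk]; linarith
  have hClt : ∀ k, C k < C (k+1) := by
    intro k
    have h2k : (0:ℝ) < 2^k := by positivity
    have h1 : (1:ℝ)/2^(k+1) < 1/2^k := by
      apply one_div_lt_one_div_of_lt h2k
      rw [pow_succ]; linarith
    have h2 := mul_lt_mul_of_pos_left h1 hε
    rw [hCk, hCk]; linarith
  set dv : ℕ × ℕ → X := fun mn => Y mn.2 - Y mn.1 with hdv_def
  set xv : ℕ × ℕ → X := fun mn => ‖dv mn‖⁻¹ • dv mn with hxv_def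
  have hdub : ∀ v : ℕ × ℕ, ‖dv v‖ ≤ 2 := by
    intro v
    calc ‖dv v‖ = ‖Y v.2 - Y v.1‖ := rfl
      _ ≤ ‖Y v.2‖ + ‖Y v.1‖ := norm_sub_le _ _
      _ ≤ 2 := by linarith [hYnorm v.1, hYnorm v.2]
  have habs_le : ∀ (g : StrongDual ℝ X) (w : X), ‖g‖ ≤ 1 → |g w| ≤ ‖w‖ := by
    intro g w hg
    calc |g w| ≤ ‖g‖ * ‖w‖ := g.le_opNorm w
      _ ≤ 1 * ‖w‖ := mul_le_mul_of_nonneg_right hg (norm_nonneg _)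
      _ = ‖w‖ := one_mul _
  -- |g (xv v)| ≤ c₀⁻¹ * |g (dv v)| whenever c₀ ≤ ‖dv v‖
  have hxv_bound : ∀ (g : StrongDual ℝ X) (v : ℕ × ℕ), c₀ ≤ ‖dv v‖ →
      |g (xv v)| ≤ c₀⁻¹ * |g (dv v)| := by
    intro g v hv
    have hpos : 0 < ‖dv v‖ := lt_of_lt_of_le hc0 hv
    have he : g (xv v) = ‖dv v‖⁻¹ * g (dv v) := by
      rw [hxv_def]; simp only [map_smul, smul_eq_mul]
    rw [he, abs_mul, abs_of_nonneg (inv_nonneg.mpr hpos.le)]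
    exact mul_le_mul_of_nonneg_right (inv_anti₀ hc0 hv) (abs_nonneg _)
  set GoodAt : ℕ → (ℕ → ℕ × ℕ) → Prop := fun j p =>
    (p j).1 < (p j).2 ∧ j ≤ (p j).1 ∧ (∀ l < j, (p l).2 < (p j).1) ∧
    c₀ ≤ f (ψ (p j).2) (dv (p j)) ∧
    (∀ l < j, |f (ψ (p l).2) (xv (p j))| < ε/2^(l+7)) ∧
    (∀ l < j, |f (ψ (p j).2) (xv (p l))| < ε/2^(j+7)) ∧
    (∀ u ∈ Submodule.span ℝ ((fun l => xv (p l)) '' Set.Iio j), ∀ t : ℝ,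
      C j * ‖u‖ ≤ C (j+1) * ‖u + t • xv (p j)‖) with hGA_def
  have hGA_coh : ∀ j p q, (∀ l ≤ j, p l = q l) → GoodAt j p → GoodAt j q := by
    intro j p q hpq hp
    obtain ⟨a1, a2, a3, a4, a5, a6, a7⟩ := hp
    have hj : q j = p j := (hpq j le_rfl).symm
    have himg : (fun l => xv (q l)) '' Set.Iio j = (fun l => xv (p l)) '' Set.Iio j := by
      apply Set.image_congr
      intro l hl
      rw [← hpq l (le_of_lt hl)]
    refine ⟨by rw [hj]; exact a1, by rw [hj]; exact a2, ?_, by rw [hj]; exact a4, ?_, ?_, ?_⟩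
    · intro l hl; rw [hj, ← hpq l hl.le]; exact a3 l hl
    · intro l hl; rw [hj, ← hpq l hl.le]; exact a5 l hl
    · intro l hl; rw [hj, ← hpq l hl.le]; exact a6 l hl
    · intro u hu t
      rw [hj]
      exact a7 u (by rwa [himg] at hu) t
  have hext : ∀ i p, (∀ j < i, GoodAt j p) →
      ∃ v, ∀ j < i+1, GoodAt j (Function.update p i v) := by
    intro i p hp
    set E : Submodule ℝ X := Submodule.span ℝ ((fun l => xv (p l)) '' Set.Iio i) with hE_def
    haveI : FiniteDimensional ℝ E :=
      FiniteDimensional.span_of_finite ℝ ((Set.finite_Iio i).image _)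
    have hcC : 1 < C (i+1) / C i := (one_lt_div (hCpos i)).mpr (hClt i)
    obtain ⟨F, η, hη, hF1, hFkey⟩ := normingNet E hcC
    set β : ℝ := c₀ * min η (ε / 2^(i+7)) with hβ_def
    have hβpos : 0 < β := mul_pos hc0 (lt_min hη (by positivity))
    have hNex : ∀ h : StrongDual ℝ X, ∃ N, ∀ a ≥ N, ∀ b ≥ N,
        |h (Y a) - h (Y b)| < β := by
      intro h
      obtain ⟨N, hN⟩ := Metric.cauchySeq_iff.mp (hcauchy h) β hβpos
      exact ⟨N, fun a ha b hb => by have := hN a ha b hb; rwa [Real.dist_eq] at this⟩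
    choose Nf hNf using hNex
    set T : Finset (StrongDual ℝ X) :=
      F ∪ (Finset.range i).image (fun l => f (ψ (p l).2)) with hT_def
    set m : ℕ := (T.sup Nf) ⊔ i ⊔ ((Finset.range i).sup (fun l => (p l).2 + 1)) with hm_def
    have hmNf : ∀ h ∈ T, Nf h ≤ m := by
      intro h hh
      calc Nf h ≤ T.sup Nf := Finset.le_sup hh
        _ ≤ m := by rw [hm_def]; exact le_sup_of_le_left le_sup_left
    have hmi : i ≤ m := by rw [hm_def]; exact le_sup_of_le_left le_sup_right
    have hmp : ∀ l < i, (p l).2 < m := by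
      intro l hl
      have h1 : (p l).2 + 1 ≤ (Finset.range i).sup (fun l => (p l).2 + 1) :=
        Finset.le_sup (f := fun l => (p l).2 + 1) (Finset.mem_range.mpr hl)
      have h2 : (Finset.range i).sup (fun l => (p l).2 + 1) ≤ m := by
        rw [hm_def]; exact le_sup_right
      omega
    have hev1 : ∀ᶠ k in atTop, |f (ψ k) (Y m)| < ε/100 := by
      have h := (NormedAddCommGroup.tendsto_nhds_zero.mp (hwsψ (Y m))) (ε/100) (by positivity)
      simpa [Real.norm_eq_abs] using h
    have hev2 : ∀ᶠ k in atTop, ∀ l ∈ Set.Iio i, |f (ψ k) (xv (p l))| < ε/2^(i+7) := by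
      rw [eventually_all_finite (Set.finite_Iio i)]
      intro l _
      have h := (NormedAddCommGroup.tendsto_nhds_zero.mp (hwsψ (xv (p l)))) (ε/2^(i+7))
        (by positivity)
      simpa [Real.norm_eq_abs] using h
    obtain ⟨n, hn12, hn3⟩ := ((hev1.and hev2).and (eventually_gt_atTop m)).exists
    obtain ⟨hn1, hn2⟩ := hn12
    refine ⟨(m, n), ?_⟩
    set q : ℕ → ℕ × ℕ := Function.update p i (m, n) with hq_def
    have hql : ∀ l, l ≠ i → q l = p l := by
      intro l hl
      rw [hq_def]; exact Function.update_of_ne hl _ _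
    have hqi : q i = (m, n) := by rw [hq_def]; exact Function.update_self _ _ _
    have hd_eq : dv (m, n) = Y n - Y m := rfl
    have hfd : c₀ ≤ f (ψ n) (dv (m, n)) := by
      rw [hd_eq, map_sub]
      have h1 := abs_lt.mp hn1
      have h2 := hYf n
      rw [hc0_def]; linarith [h1.1, h1.2]
    have hdlb : c₀ ≤ ‖dv (m, n)‖ := by
      calc c₀ ≤ f (ψ n) (dv (m, n)) := hfd
        _ ≤ |f (ψ n) (dv (m, n))| := le_abs_self _
        _ ≤ ‖dv (m, n)‖ := habs_le _ _ (hf1 _)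
    have hdpos : 0 < ‖dv (m, n)‖ := lt_of_lt_of_le hc0 hdlb
    have hznorm : ‖xv (m, n)‖ = 1 := by
      rw [hxv_def]
      simp only [norm_smul, norm_inv, norm_norm]
      exact inv_mul_cancel₀ hdpos.ne'
    have hsmallT : ∀ h ∈ T, |h (xv (m, n))| < min η (ε / 2^(i+7)) := by
      intro h hh
      have h1 : |h (dv (m, n))| < β := by
        have := hNf h n (le_trans (hmNf h hh) hn3.le) m (hmNf h hh)
        rw [hd_eq, map_sub]
        exact this
      calc |h (xv (m, n))| ≤ c₀⁻¹ * |h (dv (m, n))| := hxv_bound h (m, n) hdlb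
        _ < c₀⁻¹ * β := mul_lt_mul_of_pos_left h1 (inv_pos.mpr hc0)
        _ = min η (ε / 2^(i+7)) := by
            rw [hβ_def, ← mul_assoc, inv_mul_cancel₀ hc0.ne', one_mul]
    intro j hj
    rcases Nat.lt_succ_iff_lt_or_eq.mp hj with hji | hje
    · exact hGA_coh j p q (fun l hl => (hql l (by omega)).symm) (hp j hji)
    rw [hje]
    -- the new index
    refine ⟨?_, ?_, ?_, ?_, ?_, ?_, ?_⟩
    · rw [hqi]; exact hn3
    · rw [hqi]; exact hmi
    · intro l hl; rw [hqi, hql l (by omega)]; exact hmp l hl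
    · rw [hqi]; exact hfd
    · intro l hl
      rw [hqi, hql l (by omega)]
      have hmem : f (ψ (p l).2) ∈ T := by
        rw [hT_def]
        exact Finset.mem_union_right _
          (Finset.mem_image_of_mem _ (Finset.mem_range.mpr hl))
      calc |f (ψ (p l).2) (xv (m, n))| < min η (ε / 2^(i+7)) := hsmallT _ hmem
        _ ≤ ε / 2^(i+7) := min_le_right _ _
        _ ≤ ε / 2^(l+7) := by
            apply div_le_div_of_nonneg_left hε.le (by positivity)
            exact pow_le_pow_right₀ (by norm_num) (by omega)
    · intro l hl
      rw [hqi, hql l (by omega)]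
      exact hn2 l (Set.mem_Iio.mpr hl)
    · have himg2 : (fun l => xv (q l)) '' Set.Iio i = (fun l => xv (p l)) '' Set.Iio i := by
        apply Set.image_congr
        intro l hl
        rw [hql l (Nat.ne_of_lt (Set.mem_Iio.mp hl))]
      intro u hu t
      rw [hqi]
      have hu' : u ∈ E := by rw [hE_def, ← himg2]; exact hu
      have hzF : ∀ h ∈ F, |h (xv (m, n))| ≤ η := by
        intro h hh
        have : h ∈ T := by rw [hT_def]; exact Finset.mem_union_left _ hh
        exact le_trans (hsmallT h this).le (min_le_left _ _)
      have hkey := hFkey (xv (m, n)) hznorm hzF u hu' t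
      have h2 := mul_le_mul_of_nonneg_left hkey (hCpos i).le
      have heq : C i * (C (i+1) / C i * ‖u + t • xv (m, n)‖) =
          C (i+1) * ‖u + t • xv (m, n)‖ := by
        rw [← mul_assoc, mul_comm (C i) (C (i+1) / C i), div_mul_eq_mul_div,
          mul_div_assoc, div_self (hCpos i).ne', mul_one]
      exact heq ▸ h2
  obtain ⟨pair, hpair⟩ := myDependentChoice (fun i p => ∀ j < i, GoodAt j p)
    (by intro j hj; omega)
    (fun i p q hpq hp j hj => hGA_coh j p q (fun l hl => hpq l (by omega)) (hp j hj))
    hext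
  have hGA : ∀ j, GoodAt j pair := fun j => hpair (j+1) j (Nat.lt_succ_self j)
  have g1 : ∀ j, (pair j).1 < (pair j).2 := fun j => (hGA j).1
  have g2 : ∀ j, j ≤ (pair j).1 := fun j => (hGA j).2.1
  have g3 : ∀ j, ∀ l < j, (pair l).2 < (pair j).1 := fun j => (hGA j).2.2.1
  have g4 : ∀ j, c₀ ≤ f (ψ (pair j).2) (dv (pair j)) := fun j => (hGA j).2.2.2.1
  have g5 : ∀ j, ∀ l < j, |f (ψ (pair l).2) (xv (pair j))| < ε/2^(l+7) :=
    fun j => (hGA j).2.2.2.2.1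
  have g6 : ∀ j, ∀ l < j, |f (ψ (pair j).2) (xv (pair l))| < ε/2^(j+7) :=
    fun j => (hGA j).2.2.2.2.2.1
  have g7 : ∀ j, ∀ u ∈ Submodule.span ℝ ((fun l => xv (pair l)) '' Set.Iio j), ∀ t : ℝ,
      C j * ‖u‖ ≤ C (j+1) * ‖u + t • xv (pair j)‖ := fun j => (hGA j).2.2.2.2.2.2
  have hdlb : ∀ j, c₀ ≤ ‖dv (pair j)‖ := by
    intro j
    calc c₀ ≤ f (ψ (pair j).2) (dv (pair j)) := g4 j
      _ ≤ |f (ψ (pair j).2) (dv (pair j))| := le_abs_self _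
      _ ≤ ‖dv (pair j)‖ := habs_le _ _ (hf1 _)
  have hdpos : ∀ j, 0 < ‖dv (pair j)‖ := fun j => lt_of_lt_of_le hc0 (hdlb j)
  have hxnorm : ∀ j, ‖xv (pair j)‖ = 1 := by
    intro j
    rw [hxv_def]
    simp only [norm_smul, norm_inv, norm_norm]
    exact inv_mul_cancel₀ (hdpos j).ne'
  refine ⟨fun i => ψ ((pair i).2), ?_, fun i => xv (pair i), hxnorm, ?_, ?_, ?_, ?_⟩
  · -- strict mono
    intro i j hij
    apply hψ
    exact lt_trans (g3 j i hij) (g1 j)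
  · -- weakly null
    intro g
    rw [Metric.tendsto_atTop]
    intro δ hδ
    obtain ⟨N, hN⟩ := Metric.cauchySeq_iff.mp (hcauchy g) (δ * c₀) (by positivity)
    refine ⟨N, fun i hi => ?_⟩
    have hm : N ≤ (pair i).1 := le_trans hi (g2 i)
    have hn : N ≤ (pair i).2 := le_trans hm (g1 i).le
    have h1 : |g (Y (pair i).2) - g (Y (pair i).1)| < δ * c₀ := by
      have := hN _ hn _ hm
      rwa [Real.dist_eq] at this
    have h2 : |g (dv (pair i))| < δ * c₀ := by
      rw [hdv_def]
      simp only [map_sub]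
      exact h1
    rw [Real.dist_eq, sub_zero]
    calc |g (xv (pair i))| ≤ c₀⁻¹ * |g (dv (pair i))| := hxv_bound g (pair i) (hdlb i)
      _ < c₀⁻¹ * (δ * c₀) := mul_lt_mul_of_pos_left h2 (inv_pos.mpr hc0)
      _ = δ := by field_simp
  · -- lower bound ε/5
    intro i
    have he : f (ψ ((pair i).2)) (xv (pair i)) = ‖dv (pair i)‖⁻¹ * f (ψ ((pair i).2)) (dv (pair i)) := by
      rw [hxv_def]; simp only [map_smul, smul_eq_mul]
    have hinv : (2:ℝ)⁻¹ ≤ ‖dv (pair i)‖⁻¹ := by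
      apply inv_anti₀ (hdpos i) (hdub (pair i))
    have hmul : (2:ℝ)⁻¹ * c₀ ≤ ‖dv (pair i)‖⁻¹ * f (ψ ((pair i).2)) (dv (pair i)) :=
      mul_le_mul hinv (g4 i) hc0.le (inv_nonneg.mpr (hdpos i).le)
    rw [hc0_def] at hmul
    show ε/5 ≤ f (ψ ((pair i).2)) (xv (pair i))
    rw [he]
    linarith [hmul]
  · -- biorthogonality
    intro i j hij
    rcases lt_or_gt_of_ne hij with h | h
    · exact g5 j i h
    · exact g6 i j h
  · -- basic sequences
    have key : ∀ (a : ℕ → ℝ) (p q : ℕ), p ≤ q →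
        C p * ‖∑ l ∈ Finset.range p, a l • xv (pair l)‖ ≤
        C q * ‖∑ l ∈ Finset.range q, a l • xv (pair l)‖ := by
      intro a p q hpq
      induction q, hpq using Nat.le_induction with
      | base => exact le_rfl
      | succ q hpq ih =>
        have hu : (∑ l ∈ Finset.range q, a l • xv (pair l)) ∈
            Submodule.span ℝ ((fun l => xv (pair l)) '' Set.Iio q) := by
          apply Submodule.sum_mem
          intro l hl
          exact Submodule.smul_mem _ _ (Submodule.subset_span
            (Set.mem_image_of_mem _ (Set.mem_Iio.mpr (Finset.mem_range.mp hl))))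
        have h7 := g7 q _ hu (a q)
        rw [Finset.sum_range_succ]
        exact le_trans ih h7
    intro k hk
    intro a p q hpq hqk
    have h1 := key a p q hpq
    calc ‖∑ l ∈ Finset.range p, a l • xv (pair l)‖
        ≤ C p * ‖∑ l ∈ Finset.range p, a l • xv (pair l)‖ :=
          le_mul_of_one_le_left (norm_nonneg _) (hC1 p)
      _ ≤ C q * ‖∑ l ∈ Finset.range q, a l • xv (pair l)‖ := h1
      _ ≤ C k * ‖∑ l ∈ Finset.range q, a l • xv (pair l)‖ :=
          mul_le_mul_of_nonneg_right (hCmono q k hqk) (norm_nonneg _)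
end

section
/- Let X be a Banach space with a basis (e_i). If (e_i) is not a boundedly complete basis, then there exist K ≥ 1 and a normalized block basis (x_i)_{i=1}^∞ of (e_i) such that (x_i)_{i=1}^m is an ℓ∞⁺-K sequence for every m ≥ 1. Conversely, if there exist K ≥ 1 and such a block basis, then (e_i) is not boundedly complete. -/
open Filter

variable {X : Type*} [NormedAddCommGroup X] [NormedSpace ℝ X]

/-- Partial sum `∑_{i < p} aᵢ xᵢ` of a finite sequence. -/
def prefSum {m : ℕ} (x : Fin m → X) (a : Fin m → ℝ) (p : ℕ) : X :=
  ∑ i : Fin m, if (i : ℕ) < p then a i • x i else 0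

/-- `(x_i)_{i=1}^m` is `K`-basic: the basis constant is at most `K`. -/
def IsFinBasic {m : ℕ} (K : ℝ) (x : Fin m → X) : Prop :=
  ∀ (a : Fin m → ℝ) (p q : ℕ), p ≤ q → q ≤ m →
    ‖prefSum x a p‖ ≤ K * ‖prefSum x a q‖

/-- `(x_i)_{i=1}^m` is normalized: each vector has norm one. -/
def IsNormalizedFin {m : ℕ} (x : Fin m → X) : Prop := ∀ i, ‖x i‖ = 1

/-- An `ℓ₁⁺-K`-sequence: normalized, `K`-basic, and
`(1/K) ∑ aᵢ ≤ ‖∑ aᵢ xᵢ‖` for nonnegative scalars. -/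
def IsL1Plus {m : ℕ} (K : ℝ) (x : Fin m → X) : Prop :=
  IsNormalizedFin x ∧ IsFinBasic K x ∧
    ∀ a : Fin m → ℝ, (∀ i, 0 ≤ a i) → (1 / K) * ∑ i, a i ≤ ‖∑ i, a i • x i‖

/-- An `ℓ∞⁺-K`-sequence: normalized, `K`-basic, and there are coefficients
`aᵢ ∈ [1/K, 1]` with `‖∑ aᵢ xᵢ‖ ≤ K`. -/
def IsLInfPlus {m : ℕ} (K : ℝ) (x : Fin m → X) : Prop :=
  IsNormalizedFin x ∧ IsFinBasic K x ∧
    ∃ a : Fin m → ℝ, (∀ i, 1 / K ≤ a i ∧ a i ≤ 1) ∧ ‖∑ i, a i • x i‖ ≤ K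

/-- A `λ`-wide-(s) sequence: `2λ`-basic, `‖xᵢ‖ ≤ λ`, and
`sup_k |∑_{i≥k} aᵢ| ≤ λ ‖∑ aᵢ xᵢ‖` for all scalars. -/
def IsWideS {m : ℕ} (l : ℝ) (x : Fin m → X) : Prop :=
  IsFinBasic (2 * l) x ∧ (∀ i, ‖x i‖ ≤ l) ∧
    ∀ (a : Fin m → ℝ) (k : ℕ),
      |∑ i : Fin m, if k ≤ (i : ℕ) then a i else 0| ≤ l * ‖∑ i, a i • x i‖

/-- A `λ`-wide-(c) sequence: `λ`-basic, `1/λ ≤ ‖xᵢ‖ ≤ 1`, and `‖∑ xᵢ‖ ≤ λ`. -/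
def IsWideC {m : ℕ} (l : ℝ) (x : Fin m → X) : Prop :=
  IsFinBasic l x ∧ (∀ i, 1 / l ≤ ‖x i‖ ∧ ‖x i‖ ≤ 1) ∧ ‖∑ i, x i‖ ≤ l

/-- A basis `(e_i)` of `X` is boundedly complete if every series with bounded
partial sums converges. -/
def BoundedlyComplete (e : ℕ → X) : Prop :=
  ∀ a : ℕ → ℝ, (∃ M : ℝ, ∀ n, ‖∑ i ∈ Finset.range n, a i • e i‖ ≤ M) →
    ∃ v : X, Tendsto (fun n => ∑ i ∈ Finset.range n, a i • e i) atTop (nhds v)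

namespace NotBCAux


variable {X : Type*} [NormedAddCommGroup X] [NormedSpace ℝ X]

noncomputable def PS (e : ℕ → X) (a : ℕ → ℝ) (n : ℕ) : X :=
  ∑ i ∈ Finset.range n, a i • e i

lemma PS_window (e : ℕ → X) (c : ℕ → ℝ) (m M r : ℕ) :
    PS e (fun j => if m ≤ j ∧ j < M then c j else 0) r
      = ∑ j ∈ Finset.Ico m (min r M), c j • e j := by
  unfold PS
  have h1 : ∀ j, (if m ≤ j ∧ j < M then c j else 0) • e j
      = if m ≤ j ∧ j < M then c j • e j else 0 := by
    intro j; split <;> simp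
  simp_rw [h1]
  rw [← Finset.sum_filter]
  congr 1
  ext j
  simp only [Finset.mem_filter, Finset.mem_range, Finset.mem_Ico, lt_min_iff]
  omega

section BasisConstant

variable [CompleteSpace X]

noncomputable def Ysub (e : ℕ → X) : Submodule ℝ (BoundedContinuousFunction ℕ X) where
  carrier := {s | s 0 = 0 ∧ (∀ n, ∃ c : ℝ, s (n+1) - s n = c • e n) ∧ CauchySeq (s : ℕ → X)}
  add_mem' := by
    rintro s t ⟨hs0, hsi, hsc⟩ ⟨ht0, hti, htc⟩
    refine ⟨by simp [hs0, ht0], fun n => ?_, hsc.add htc⟩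
    obtain ⟨c, hc⟩ := hsi n; obtain ⟨d, hd⟩ := hti n
    refine ⟨c + d, ?_⟩
    have : (s + t) (n+1) - (s + t) n = (s (n+1) - s n) + (t (n+1) - t n) := by
      simp only [BoundedContinuousFunction.add_apply]; abel
    rw [this, hc, hd, add_smul]
  zero_mem' := ⟨rfl, fun n => ⟨0, by simp⟩, cauchySeq_const 0⟩
  smul_mem' := by
    rintro r s ⟨hs0, hsi, hsc⟩
    refine ⟨by simp [hs0], fun n => ?_, (uniformContinuous_const_smul r).comp_cauchySeq hsc⟩
    obtain ⟨c, hc⟩ := hsi n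
    refine ⟨r * c, ?_⟩
    have : (r • s) (n+1) - (r • s) n = r • (s (n+1) - s n) := by
      simp only [BoundedContinuousFunction.coe_smul, Pi.smul_apply, smul_sub]
    rw [this, hc, smul_smul]

lemma mem_Ysub {e : ℕ → X} {s : BoundedContinuousFunction ℕ X} :
    s ∈ Ysub e ↔ s 0 = 0 ∧ (∀ n, ∃ c : ℝ, s (n+1) - s n = c • e n) ∧ CauchySeq (s : ℕ → X) :=
  Iff.rfl

lemma isClosed_Ysub (e : ℕ → X) : IsClosed ((Ysub e : Set (BoundedContinuousFunction ℕ X))) := by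
  have h1 : IsClosed {s : BoundedContinuousFunction ℕ X | s 0 = 0} :=
    isClosed_eq (continuous_eval_const 0) continuous_const
  have h2 : IsClosed {s : BoundedContinuousFunction ℕ X |
      ∀ n, ∃ c : ℝ, s (n+1) - s n = c • e n} := by
    have : {s : BoundedContinuousFunction ℕ X | ∀ n, ∃ c : ℝ, s (n+1) - s n = c • e n}
        = ⋂ n : ℕ, (fun s : BoundedContinuousFunction ℕ X => s (n+1) - s n) ⁻¹'
            (Submodule.span ℝ {e n} : Set X) := by
      ext s
      simp only [Set.mem_setOf_eq, Set.mem_iInter, Set.mem_preimage, SetLike.mem_coe,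
        Submodule.mem_span_singleton]
      exact ⟨fun h n => (h n).imp fun c hc => hc.symm, fun h n => (h n).imp fun c hc => hc.symm⟩
    rw [this]
    refine isClosed_iInter fun n => IsClosed.preimage ?_ (Submodule.closed_of_finiteDimensional _)
    exact (continuous_eval_const _).sub
      (continuous_eval_const _)
  have h3 : IsClosed {s : BoundedContinuousFunction ℕ X | CauchySeq (s : ℕ → X)} := by
    rw [← isSeqClosed_iff_isClosed]
    intro f s hf hfs
    show CauchySeq (s : ℕ → X)
    rw [Metric.cauchySeq_iff]
    intro ε hε
    obtain ⟨k, hk⟩ : ∃ k, dist (f k) s < ε/3 := by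
      have := (Metric.tendsto_atTop.mp hfs) (ε/3) (by linarith)
      obtain ⟨N, hN⟩ := this
      exact ⟨N, hN N le_rfl⟩
    obtain ⟨N, hN⟩ := Metric.cauchySeq_iff.mp (hf k) (ε/3) (by linarith)
    refine ⟨N, fun p hp q hq => ?_⟩
    have h1' : dist (s p) (f k p) ≤ dist (f k) s := by
      rw [dist_comm]; exact BoundedContinuousFunction.dist_coe_le_dist p
    have h2' : dist (f k q) (s q) ≤ dist (f k) s :=
      BoundedContinuousFunction.dist_coe_le_dist q
    calc dist (s p) (s q)
        ≤ dist (s p) (f k p) + dist (f k p) (f k q) + dist (f k q) (s q) := dist_triangle4 _ _ _ _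
      _ < ε/3 + ε/3 + ε/3 := by
          have := hN p hp q hq
          have := lt_of_le_of_lt h1' hk
          have := lt_of_le_of_lt h2' hk
          linarith [hN p hp q hq]
      _ = ε := by ring
  have : ((Ysub e : Set (BoundedContinuousFunction ℕ X)))
      = {s : BoundedContinuousFunction ℕ X | s 0 = 0} ∩ ({s : BoundedContinuousFunction ℕ X | ∀ n, ∃ c : ℝ, s (n+1) - s n = c • e n}
          ∩ {s : BoundedContinuousFunction ℕ X | CauchySeq ⇑s}) := by
    ext s; exact Iff.rfl
  rw [this]
  exact h1.inter (h2.inter h3)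

noncomputable def limY (e : ℕ → X) (s : Ysub e) : X := limUnder atTop ((s : BoundedContinuousFunction ℕ X) : ℕ → X)

lemma cauchy_Y (e : ℕ → X) (s : Ysub e) : CauchySeq ((s : BoundedContinuousFunction ℕ X) : ℕ → X) :=
  s.2.2.2

lemma tendsto_limY (e : ℕ → X) (s : Ysub e) :
    Tendsto ((s : BoundedContinuousFunction ℕ X) : ℕ → X) atTop (nhds (limY e s)) :=
  (cauchy_Y e s).tendsto_limUnder

noncomputable def TY (e : ℕ → X) : Ysub e →L[ℝ] X :=
  LinearMap.mkContinuous
    { toFun := limY e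
      map_add' := fun s t => by
        refine tendsto_nhds_unique (tendsto_limY e (s + t)) ?_
        have h := (tendsto_limY e s).add (tendsto_limY e t)
        exact h.congr fun n => by simp
      map_smul' := fun r s => by
        refine tendsto_nhds_unique (tendsto_limY e (r • s)) ?_
        have h := (tendsto_limY e s).const_smul r
        exact h.congr fun n => by simp }
    1 (fun s => by
      rw [one_mul]
      refine le_of_tendsto' (tendsto_limY e s).norm fun n => ?_
      exact BoundedContinuousFunction.norm_coe_le_norm _ n)

lemma TY_apply (e : ℕ → X) (s : Ysub e) : TY e s = limY e s := rfl

lemma exists_coeffs (e : ℕ → X) (s : Ysub e) :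
    ∃ c : ℕ → ℝ, ∀ n, ((s : BoundedContinuousFunction ℕ X) : ℕ → X) n
      = ∑ i ∈ Finset.range n, c i • e i := by
  obtain ⟨h0, hinc, -⟩ := s.2
  choose c hc using hinc
  refine ⟨c, fun n => ?_⟩
  induction n with
  | zero => simpa using h0
  | succ n ih =>
      rw [Finset.sum_range_succ, ← ih, ← hc n]; abel

lemma mkY (e : ℕ → X) (a : ℕ → ℝ) (v : X)
    (hconv : Tendsto (fun n => ∑ i ∈ Finset.range n, a i • e i) atTop (nhds v)) :
    ∃ s : Ysub e, (∀ n, ((s : BoundedContinuousFunction ℕ X) : ℕ → X) n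
        = ∑ i ∈ Finset.range n, a i • e i) ∧ TY e s = v := by
  obtain ⟨Cb, hCb⟩ : ∃ Cb, ∀ n, ‖∑ i ∈ Finset.range n, a i • e i‖ ≤ Cb := by
    obtain ⟨Cb, hCb⟩ := hconv.norm.bddAbove_range
    exact ⟨Cb, fun n => hCb ⟨n, rfl⟩⟩
  set f : BoundedContinuousFunction ℕ X :=
    BoundedContinuousFunction.ofNormedAddCommGroup
      (fun n => ∑ i ∈ Finset.range n, a i • e i)
      (continuous_of_discreteTopology) Cb hCb with hf
  have hfn : ∀ n, f n = ∑ i ∈ Finset.range n, a i • e i := fun n => rfl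
  have hmem : f ∈ Ysub e := by
    refine ⟨by simp [hfn], fun n => ⟨a n, ?_⟩, ?_⟩
    · rw [hfn, hfn, Finset.sum_range_succ]; abel
    · exact (hconv.congr fun n => (hfn n).symm).cauchySeq
  refine ⟨⟨f, hmem⟩, hfn, ?_⟩
  rw [TY_apply]
  exact ((hconv.congr fun n => (hfn n).symm) : Tendsto (f : ℕ → X) atTop (nhds v)).limUnder_eq

lemma basis_constant (e : ℕ → X)
    (hbasis : ∀ v : X, ∃! a : ℕ → ℝ,
      Tendsto (fun n => ∑ i ∈ Finset.range n, a i • e i) atTop (nhds v)) :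
    ∃ C : ℝ, 1 ≤ C ∧ ∀ (a : ℕ → ℝ) (p q : ℕ), p ≤ q →
      ‖∑ i ∈ Finset.range p, a i • e i‖ ≤ C * ‖∑ i ∈ Finset.range q, a i • e i‖ := by
  haveI : CompleteSpace (Ysub e) := (isClosed_Ysub e).completeSpace_coe
  have hinj : Function.Injective (TY e) := by
    intro s t hst
    obtain ⟨cs, hcs⟩ := exists_coeffs e s
    obtain ⟨ct, hct⟩ := exists_coeffs e t
    have hs' : Tendsto (fun n => ∑ i ∈ Finset.range n, cs i • e i) atTop (nhds (TY e s)) :=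
      (tendsto_limY e s).congr fun n => hcs n
    have ht' : Tendsto (fun n => ∑ i ∈ Finset.range n, ct i • e i) atTop (nhds (TY e s)) := by
      rw [hst]; exact (tendsto_limY e t).congr fun n => hct n
    obtain ⟨a, -, huniq⟩ := hbasis (TY e s)
    have : cs = ct := by rw [huniq cs hs', huniq ct ht']
    apply Subtype.ext
    apply BoundedContinuousFunction.ext
    intro n
    rw [hcs n, hct n, this]
  have hsurj : Function.Surjective (TY e) := by
    intro v
    obtain ⟨a, ha, -⟩ := hbasis v
    obtain ⟨s, -, hs⟩ := mkY e a v ha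
    exact ⟨s, hs⟩
  let equiv := ContinuousLinearEquiv.ofBijective (TY e)
    (LinearMap.ker_eq_bot.mpr hinj) (LinearMap.range_eq_top.mpr hsurj)
  set C : ℝ := max ‖(equiv.symm : X →L[ℝ] Ysub e)‖ 1 with hC
  have hC1 : (1:ℝ) ≤ C := le_max_right _ _
  refine ⟨C, hC1, fun a p q hpq => ?_⟩
  set a' : ℕ → ℝ := fun i => if i < q then a i else 0 with ha'
  have key : ∀ n, n ≤ q → ∑ i ∈ Finset.range n, a' i • e i = ∑ i ∈ Finset.range n, a i • e i := by
    intro n hn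
    refine Finset.sum_congr rfl fun i hi => ?_
    rw [Finset.mem_range] at hi
    have : i < q := lt_of_lt_of_le hi hn
    simp [ha', this]
  have key2 : ∀ n, q ≤ n → ∑ i ∈ Finset.range n, a' i • e i = ∑ i ∈ Finset.range q, a i • e i := by
    intro n hn
    rw [← key q le_rfl]
    rw [← Finset.sum_range_add_sum_Ico _ hn]
    have : ∑ i ∈ Finset.Ico q n, a' i • e i = 0 := by
      refine Finset.sum_eq_zero fun i hi => ?_
      rw [Finset.mem_Ico] at hi
      simp [ha', not_lt.mpr hi.1]
    rw [this, add_zero]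
  have hconv : Tendsto (fun n => ∑ i ∈ Finset.range n, a' i • e i) atTop
      (nhds (∑ i ∈ Finset.range q, a i • e i)) := by
    refine Tendsto.congr' ?_ tendsto_const_nhds
    filter_upwards [eventually_ge_atTop q] with n hn
    exact (key2 n hn).symm
  obtain ⟨s, hsn, hTs⟩ := mkY e a' _ hconv
  have hnorm : ‖s‖ ≤ C * ‖TY e s‖ := by
    have h1 : equiv.symm (TY e s) = s := by
      have : equiv s = TY e s := rfl
      rw [← this, ContinuousLinearEquiv.symm_apply_apply]
    calc ‖s‖ = ‖equiv.symm (TY e s)‖ := by rw [h1]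
      _ ≤ ‖(equiv.symm : X →L[ℝ] Ysub e)‖ * ‖TY e s‖ :=
          (equiv.symm : X →L[ℝ] Ysub e).le_opNorm _
      _ ≤ C * ‖TY e s‖ := by
          apply mul_le_mul_of_nonneg_right (le_max_left _ _) (norm_nonneg _)
  calc ‖∑ i ∈ Finset.range p, a i • e i‖
      = ‖((s : BoundedContinuousFunction ℕ X) : ℕ → X) p‖ := by rw [hsn p, key p hpq]
    _ ≤ ‖s‖ := BoundedContinuousFunction.norm_coe_le_norm _ p
    _ ≤ C * ‖TY e s‖ := hnorm
    _ = C * ‖∑ i ∈ Finset.range q, a i • e i‖ := by rw [hTs]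

end BasisConstant

section Blocks

variable {X : Type*} [NormedAddCommGroup X] [NormedSpace ℝ X]

noncomputable def bseq (g : ℕ → ℕ → ℝ) : ℕ → ℝ := fun j => ∑ n ∈ Finset.range (j+1), g n j

variable {e : ℕ → X} {k : ℕ → ℕ} {g : ℕ → ℕ → ℝ}

lemma bseq_eq (hk : StrictMono k) (hg : ∀ n j, g n j ≠ 0 → k n ≤ j ∧ j < k (n+1))
    {p j : ℕ} (h1 : k p ≤ j) (h2 : j < k (p+1)) : bseq g j = g p j := by
  unfold bseq
  refine Finset.sum_eq_single_of_mem p ?_ ?_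
  · rw [Finset.mem_range]
    exact Nat.lt_succ_of_le (le_trans hk.le_apply h1)
  · intro n _ hne
    by_contra h
    obtain ⟨ha, hb⟩ := hg n j h
    rcases lt_or_gt_of_ne hne with hlt | hgt
    · exact absurd (lt_of_lt_of_le hb (hk.monotone (Nat.succ_le_of_lt hlt))) (not_lt.mpr h1)
    · exact absurd (le_trans (hk.monotone (Nat.succ_le_of_lt hgt)) ha) (not_le.mpr h2)

lemma bseq_zero (hk : StrictMono k) (hg : ∀ n j, g n j ≠ 0 → k n ≤ j ∧ j < k (n+1))
    {j : ℕ} (h : j < k 0) : bseq g j = 0 := by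
  refine Finset.sum_eq_zero fun n _ => ?_
  by_contra hne
  exact absurd (le_trans (hk.monotone (Nat.zero_le n)) (hg n j hne).1) (not_le.mpr h)

lemma PS_bseq_zero (hk : StrictMono k) (hg : ∀ n j, g n j ≠ 0 → k n ≤ j ∧ j < k (n+1))
    {r : ℕ} (h : r ≤ k 0) : PS e (bseq g) r = 0 := by
  refine Finset.sum_eq_zero fun j hj => ?_
  rw [Finset.mem_range] at hj
  rw [bseq_zero hk hg (lt_of_lt_of_le hj h), zero_smul]

lemma PS_bseq_mid (hk : StrictMono k) (hg : ∀ n j, g n j ≠ 0 → k n ≤ j ∧ j < k (n+1))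
    {p r : ℕ} (h1 : k p ≤ r) (h2 : r ≤ k (p+1)) :
    PS e (bseq g) r = PS e (bseq g) (k p) + ∑ j ∈ Finset.Ico (k p) r, g p j • e j := by
  have hsub : ∑ j ∈ Finset.Ico (k p) r, bseq g j • e j
      = PS e (bseq g) r - PS e (bseq g) (k p) :=
    Finset.sum_Ico_eq_sub _ h1
  have hcongr : ∑ j ∈ Finset.Ico (k p) r, bseq g j • e j
      = ∑ j ∈ Finset.Ico (k p) r, g p j • e j := by
    refine Finset.sum_congr rfl fun j hj => ?_
    rw [Finset.mem_Ico] at hj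
    rw [bseq_eq hk hg hj.1 (lt_of_lt_of_le hj.2 h2)]
  rw [← hcongr, hsub]; abel

lemma PS_bseq_block (hk : StrictMono k) (hg : ∀ n j, g n j ≠ 0 → k n ≤ j ∧ j < k (n+1))
    (p : ℕ) :
    PS e (bseq g) (k p)
      = ∑ n ∈ Finset.range p, ∑ j ∈ Finset.Ico (k n) (k (n+1)), g n j • e j := by
  induction p with
  | zero => simpa using PS_bseq_zero hk hg le_rfl
  | succ p ih =>
      rw [Finset.sum_range_succ, ← ih,
        PS_bseq_mid hk hg (hk.monotone (Nat.le_succ p)) le_rfl]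

lemma exists_block (hk : StrictMono k) {r : ℕ} (h : k 0 ≤ r) :
    ∃ p, k p ≤ r ∧ r < k (p+1) := by
  set p := Nat.findGreatest (fun n => k n ≤ r) r with hp
  have h1 : k p ≤ r := Nat.findGreatest_spec (P := fun n => k n ≤ r) (Nat.zero_le r) h
  refine ⟨p, h1, ?_⟩
  by_contra hcon
  push_neg at hcon
  have h2 : p + 1 ≤ r := le_trans hk.le_apply hcon
  have := Nat.le_findGreatest (P := fun n => k n ≤ r) h2 hcon
  omega

end Blocks

section Forward

variable {X : Type*} [NormedAddCommGroup X] [NormedSpace ℝ X]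

lemma prefSum_eq_sum_range {m : ℕ} (x : ℕ → X) (c : Fin m → ℝ) (p : ℕ) (hp : p ≤ m) :
    prefSum (fun i : Fin m => x (i : ℕ)) c p
      = ∑ n ∈ Finset.range p, (if h : n < m then c ⟨n, h⟩ else 0) • x n := by
  unfold prefSum
  have h1 : ∀ i : Fin m, (if (i : ℕ) < p then c i • x (i : ℕ) else 0)
      = (fun n => if n < p then (if h : n < m then c ⟨n, h⟩ else 0) • x n else 0) (i : ℕ) := by
    intro i
    by_cases hip : (i : ℕ) < p
    · simp [hip, i.isLt]
    · simp [hip]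
  simp_rw [h1]
  rw [Fin.sum_univ_eq_sum_range (fun n => if n < p then (if h : n < m then c ⟨n, h⟩ else 0) • x n else 0) m]
  rw [← Finset.sum_filter]
  congr 1
  ext j
  simp only [Finset.mem_filter, Finset.mem_range]
  omega

lemma prefSum_total {m : ℕ} (x : Fin m → X) (c : Fin m → ℝ) :
    prefSum x c m = ∑ i, c i • x i := by
  unfold prefSum
  exact Finset.sum_congr rfl fun i _ => by simp [i.isLt]

lemma forward [CompleteSpace X] (e : ℕ → X)
    (hbasis : ∀ v : X, ∃! a : ℕ → ℝ,
      Tendsto (fun n => ∑ i ∈ Finset.range n, a i • e i) atTop (nhds v))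
    (h : ¬ BoundedlyComplete e) :
    ∃ K : ℝ, 1 ≤ K ∧ ∃ (k : ℕ → ℕ) (x : ℕ → X), StrictMono k ∧
        (∀ n, x n ∈ Submodule.span ℝ (e '' Set.Ico (k n) (k (n + 1)))) ∧
        (∀ n, ‖x n‖ = 1) ∧
        ∀ m : ℕ, 1 ≤ m → IsLInfPlus K (fun i : Fin m => x (i : ℕ)) := by
  obtain ⟨C, hC1, hC⟩ := basis_constant e hbasis
  have hCpos : (0:ℝ) < C := lt_of_lt_of_le one_pos hC1
  rw [BoundedlyComplete] at h
  push_neg at h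
  obtain ⟨a, ⟨M₀, hM₀⟩, hnc⟩ := h
  set σ : ℕ → X := fun n => ∑ i ∈ Finset.range n, a i • e i with hσ
  set M : ℝ := max M₀ 1 with hM
  have hMpos : (0:ℝ) < M := lt_of_lt_of_le one_pos (le_max_right _ _)
  have hMb : ∀ n, ‖σ n‖ ≤ M := fun n => le_trans (hM₀ n) (le_max_left _ _)
  have hnotCauchy : ¬ CauchySeq σ := by
    intro hc
    obtain ⟨v, hv⟩ := cauchySeq_tendsto_of_complete hc
    exact hnc v hv
  obtain ⟨ε, hε, hsep⟩ : ∃ ε > 0, ∀ N, ∃ p ≥ N, ∃ q ≥ N, ε ≤ dist (σ p) (σ q) := by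
    rw [Metric.cauchySeq_iff] at hnotCauchy
    push_neg at hnotCauchy
    obtain ⟨ε, hε, hh⟩ := hnotCauchy
    exact ⟨ε, hε, hh⟩
  have hstep : ∀ N, ∃ p q, N ≤ p ∧ p < q ∧ ε ≤ ‖σ q - σ p‖ := by
    intro N
    obtain ⟨p, hp, q, hq, hd⟩ := hsep N
    rcases lt_trichotomy p q with hlt | heq | hgt
    · exact ⟨p, q, hp, hlt, by rwa [dist_eq_norm'] at hd⟩
    · exfalso; rw [heq, dist_self] at hd; linarith
    · exact ⟨q, p, hq, hgt, by rwa [dist_eq_norm] at hd⟩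
  choose f1 f2 hf1 hf2 hf3 using hstep
  set N : ℕ → ℕ := fun n => Nat.rec 0 (fun _ Nn => f2 Nn) n with hN
  set k : ℕ → ℕ := fun n => f1 (N n) with hk
  have hNsucc : ∀ n, N (n+1) = f2 (N n) := fun n => rfl
  have hq_gt : ∀ n, k n < f2 (N n) := fun n => hf2 _
  have hq_le : ∀ n, f2 (N n) ≤ k (n+1) := by
    intro n
    calc f2 (N n) ≤ f1 (f2 (N n)) := hf1 _
      _ = k (n+1) := rfl
  have hkmono : StrictMono k := by
    apply strictMono_nat_of_lt_succ
    intro n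
    exact lt_of_lt_of_le (hq_gt n) (hq_le n)
  set u : ℕ → X := fun n => σ (k (n+1)) - σ (k n) with hu
  have hurep : ∀ n, u n = ∑ j ∈ Finset.Ico (k n) (k (n+1)), a j • e j := by
    intro n
    rw [Finset.sum_Ico_eq_sub _ (hkmono (Nat.lt_succ_self n)).le]
  have hulb : ∀ n, ε ≤ C * ‖u n‖ := by
    intro n
    set a' : ℕ → ℝ := fun j => if k n ≤ j ∧ j < k (n+1) then a j else 0 with ha'
    have e1 : PS e a' (f2 (N n)) = σ (f2 (N n)) - σ (k n) := by
      rw [PS_window, min_eq_left (hq_le n), Finset.sum_Ico_eq_sub _ (hq_gt n).le]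
    have e2 : PS e a' (k (n+1)) = u n := by
      rw [PS_window, min_self, hurep n]
    calc ε ≤ ‖σ (f2 (N n)) - σ (k n)‖ := hf3 _
      _ = ‖PS e a' (f2 (N n))‖ := by rw [e1]
      _ ≤ C * ‖PS e a' (k (n+1))‖ := hC a' _ _ (hq_le n)
      _ = C * ‖u n‖ := by rw [e2]
  have hupos : ∀ n, 0 < ‖u n‖ := by
    intro n
    by_contra hcon
    push_neg at hcon
    have h0 : ‖u n‖ = 0 := le_antisymm hcon (norm_nonneg _)
    have h1 := hulb n
    rw [h0, mul_zero] at h1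
    linarith
  have hune0 : ∀ n, u n ≠ 0 := fun n => norm_ne_zero_iff.mp (hupos n).ne'
  have huub : ∀ n, ‖u n‖ ≤ 2 * M := by
    intro n
    calc ‖u n‖ ≤ ‖σ (k (n+1))‖ + ‖σ (k n)‖ := norm_sub_le _ _
      _ ≤ M + M := add_le_add (hMb _) (hMb _)
      _ = 2 * M := by ring
  set x : ℕ → X := fun n => ‖u n‖⁻¹ • u n with hx
  have hxnorm : ∀ n, ‖x n‖ = 1 := fun n => norm_smul_inv_norm (hune0 n)
  have hxspan : ∀ n, x n ∈ Submodule.span ℝ (e '' Set.Ico (k n) (k (n + 1))) := by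
    intro n
    apply Submodule.smul_mem
    rw [hurep n]
    refine Submodule.sum_mem _ fun j hj => Submodule.smul_mem _ _ (Submodule.subset_span ?_)
    rw [Finset.mem_Ico] at hj
    exact ⟨j, hj, rfl⟩
  set K : ℝ := C + 2 * C * M / ε with hK
  have h2CM : (0:ℝ) < 2 * C * M := by positivity
  have hKC : C ≤ K := by
    rw [hK]
    exact le_add_of_nonneg_right (by positivity)
  have hK1 : (1:ℝ) ≤ K := le_trans hC1 hKC
  refine ⟨K, hK1, k, x, hkmono, hxspan, hxnorm, fun m _ => ?_⟩
  have hfinbasic : IsFinBasic K (fun i : Fin m => x (i : ℕ)) := by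
    intro c p q hpq hqm
    set c' : ℕ → ℝ := fun n => if h : n < m then c ⟨n, h⟩ else 0 with hc'
    set g : ℕ → ℕ → ℝ := fun n j =>
      if k n ≤ j ∧ j < k (n+1) then c' n * (‖u n‖⁻¹ * a j) else 0 with hg'
    have hg : ∀ n j, g n j ≠ 0 → k n ≤ j ∧ j < k (n+1) := by
      intro n j hne
      by_contra hcon
      exact hne (by simp [hg', hcon])
    have hblock : ∀ n, ∑ j ∈ Finset.Ico (k n) (k (n+1)), g n j • e j = c' n • x n := by
      intro n
      have : ∀ j ∈ Finset.Ico (k n) (k (n+1)),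
          g n j • e j = c' n • (‖u n‖⁻¹ • (a j • e j)) := by
        intro j hj
        rw [Finset.mem_Ico] at hj
        simp only [hg', if_pos hj]
        rw [smul_smul, smul_smul, mul_assoc]
      rw [Finset.sum_congr rfl this, ← Finset.smul_sum, ← Finset.smul_sum, ← hurep n]
    have hkey : ∀ r, r ≤ m → prefSum (fun i : Fin m => x (i : ℕ)) c r = PS e (bseq g) (k r) := by
      intro r hr
      rw [prefSum_eq_sum_range x c r hr, PS_bseq_block hkmono hg r]
      exact Finset.sum_congr rfl fun n _ => (hblock n).symm
    rw [hkey p (le_trans hpq hqm), hkey q hqm]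
    calc ‖PS e (bseq g) (k p)‖ ≤ C * ‖PS e (bseq g) (k q)‖ :=
          hC (bseq g) _ _ (hkmono.monotone hpq)
      _ ≤ K * ‖PS e (bseq g) (k q)‖ :=
          mul_le_mul_of_nonneg_right hKC (norm_nonneg _)
  refine ⟨fun i => hxnorm _, hfinbasic, fun i => ‖u (i : ℕ)‖ / (2 * M), fun i => ⟨?_, ?_⟩, ?_⟩
  · -- 1/K ≤ aa i
    have hu_lb : ε / C ≤ ‖u (i : ℕ)‖ := (div_le_iff₀' hCpos).mpr (hulb _)
    have h1 : 1 / K ≤ ε / (2 * C * M) := by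
      have hKq : 2 * C * M / ε ≤ K := by rw [hK]; linarith
      have hqpos : (0:ℝ) < 2 * C * M / ε := by positivity
      calc 1 / K ≤ 1 / (2 * C * M / ε) := one_div_le_one_div_of_le hqpos hKq
        _ = ε / (2 * C * M) := by rw [one_div_div]
    have h2 : ε / (2 * C * M) ≤ ‖u (i : ℕ)‖ / (2 * M) := by
      rw [div_le_div_iff₀ (by positivity) (by positivity)]
      calc ε * (2 * M) = (ε / C) * (2 * C * M) := by field_simp
        _ ≤ ‖u (i : ℕ)‖ * (2 * C * M) :=
            mul_le_mul_of_nonneg_right hu_lb (le_of_lt h2CM)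
    linarith
  · exact (div_le_one (by positivity)).mpr (huub _)
  · -- ‖∑ aa i • x i‖ ≤ K
    have hsum : ∑ i : Fin m, (‖u (i : ℕ)‖ / (2 * M)) • x (i : ℕ)
        = (2 * M)⁻¹ • (σ (k m) - σ (k 0)) := by
      rw [Fin.sum_univ_eq_sum_range (fun n => (‖u n‖ / (2 * M)) • x n) m]
      have : ∀ n, (‖u n‖ / (2 * M)) • x n = (2 * M)⁻¹ • u n := by
        intro n
        rw [hx]
        rw [smul_smul]
        congr 1
        rw [div_eq_mul_inv, mul_assoc, mul_comm, mul_assoc]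
        rw [inv_mul_cancel₀ (hupos n).ne', mul_one]
      rw [Finset.sum_congr rfl fun n _ => this n, ← Finset.smul_sum]
      congr 1
      exact Finset.sum_range_sub (fun n => σ (k n)) m
    rw [hsum]
    rw [norm_smul]
    have : ‖σ (k m) - σ (k 0)‖ ≤ 2 * M := by
      calc ‖σ (k m) - σ (k 0)‖ ≤ ‖σ (k m)‖ + ‖σ (k 0)‖ := norm_sub_le _ _
        _ ≤ M + M := add_le_add (hMb _) (hMb _)
        _ = 2 * M := by ring
    have h2M : ‖(2 * M)⁻¹‖ = (2 * M)⁻¹ := by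
      rw [Real.norm_eq_abs, abs_of_pos (by positivity)]
    rw [h2M]
    calc (2 * M)⁻¹ * ‖σ (k m) - σ (k 0)‖ ≤ (2 * M)⁻¹ * (2 * M) := by
          apply mul_le_mul_of_nonneg_left this (by positivity)
      _ = 1 := by field_simp
      _ ≤ K := hK1

end Forward
section Reverse

variable {X : Type*} [NormedAddCommGroup X] [NormedSpace ℝ X]

lemma indicator_partial (e : ℕ → X) (i : ℕ) :
    Tendsto (fun n => ∑ l ∈ Finset.range n, (fun l => if l = i then (1:ℝ) else 0) l • e l)
      atTop (nhds (e i)) := by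
  have key : ∀ n, i < n → ∑ l ∈ Finset.range n, (if l = i then (1:ℝ) else 0) • e l = e i := by
    intro n hn
    rw [Finset.sum_eq_single_of_mem i (Finset.mem_range.mpr hn)]
    · simp
    · intro l _ hne; simp [hne]
  refine Tendsto.congr' ?_ tendsto_const_nhds
  filter_upwards [eventually_gt_atTop i] with n hn
  exact (key n hn).symm

lemma e_injective (e : ℕ → X)
    (hbasis : ∀ v : X, ∃! a : ℕ → ℝ,
      Tendsto (fun n => ∑ i ∈ Finset.range n, a i • e i) atTop (nhds v)) :
    Function.Injective e := by
  intro i j hij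
  by_contra hne
  obtain ⟨a, -, huniq⟩ := hbasis (e i)
  have h1 := huniq _ (indicator_partial e i)
  have h2 := huniq _ (by rw [hij]; exact indicator_partial e j)
  have := congrFun (h1.trans h2.symm) i
  simp only [if_pos rfl] at this
  rw [if_neg hne] at this
  exact one_ne_zero this

lemma exists_rep (e : ℕ → X) (he : Function.Injective e) {a b : ℕ} {v : X}
    (hv : v ∈ Submodule.span ℝ (e '' Set.Ico a b)) :
    ∃ c : ℕ → ℝ, v = ∑ j ∈ Finset.Ico a b, c j • e j := by
  classical
  rw [show Set.Ico a b = ↑(Finset.Ico a b) by simp, ← Finset.coe_image] at hv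
  obtain ⟨f, -, hf⟩ := Submodule.mem_span_finset.mp hv
  refine ⟨fun j => f (e j), ?_⟩
  rw [← hf]
  exact Finset.sum_image fun i _ l _ h => he h

lemma reverse [CompleteSpace X] (e : ℕ → X)
    (hbasis : ∀ v : X, ∃! a : ℕ → ℝ,
      Tendsto (fun n => ∑ i ∈ Finset.range n, a i • e i) atTop (nhds v))
    (K : ℝ) (hK1 : 1 ≤ K) (k : ℕ → ℕ) (x : ℕ → X) (hk : StrictMono k)
    (hspan : ∀ n, x n ∈ Submodule.span ℝ (e '' Set.Ico (k n) (k (n + 1))))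
    (hxnorm : ∀ n, ‖x n‖ = 1)
    (hm : ∀ m : ℕ, 1 ≤ m → IsLInfPlus K (fun i : Fin m => x (i : ℕ))) :
    ¬ BoundedlyComplete e := by
  obtain ⟨C, hC1, hC⟩ := basis_constant e hbasis
  have he := e_injective e hbasis
  have hKpos : (0:ℝ) < K := lt_of_lt_of_le one_pos hK1
  choose c hc using fun n => exists_rep e he (hspan n)
  -- coefficient sequences of each length with uniform partial-sum bounds
  have hA : ∀ m : ℕ, ∃ b : ℕ → ℝ, (∀ i, 1/K ≤ b i ∧ b i ≤ 1) ∧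
      ∀ j ≤ m, ‖∑ i ∈ Finset.range j, b i • x i‖ ≤ K * K := by
    intro m
    obtain ⟨-, hbasic, aa, haa, hle⟩ := hm (max m 1) (le_max_right m 1)
    set b : ℕ → ℝ := fun i => if h : i < max m 1 then aa ⟨i, h⟩ else 1 with hb
    refine ⟨b, fun i => ?_, fun j hj => ?_⟩
    · by_cases hi : i < max m 1
      · simp only [hb, dif_pos hi]; exact haa _
      · simp only [hb, dif_neg hi]
        exact ⟨(div_le_one hKpos).mpr hK1, le_rfl⟩
    · have hjM : j ≤ max m 1 := le_trans hj (le_max_left m 1)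
      have hb1 := hbasic aa j (max m 1) hjM le_rfl
      rw [prefSum_total] at hb1
      have hpre : prefSum (fun i : Fin (max m 1) => x (i:ℕ)) aa j
          = ∑ i ∈ Finset.range j, b i • x i := by
        rw [prefSum_eq_sum_range x aa j hjM]
        refine Finset.sum_congr rfl fun i hi => ?_
        rw [Finset.mem_range] at hi
        have hi' : i < max m 1 := lt_of_lt_of_le hi hjM
        simp only [hb, dif_pos hi']
      calc ‖∑ i ∈ Finset.range j, b i • x i‖
          = ‖prefSum (fun i : Fin (max m 1) => x (i:ℕ)) aa j‖ := by rw [hpre]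
        _ ≤ K * ‖∑ i, aa i • x (i:ℕ)‖ := hb1
        _ ≤ K * K := mul_le_mul_of_nonneg_left hle (le_of_lt hKpos)
  choose A hA1 hA2 using hA
  set F : ℕ → Set (ℕ → ℝ) := fun m =>
    {b | (∀ i, b i ∈ Set.Icc (1/K) 1) ∧
      ∀ j ≤ m, ‖∑ i ∈ Finset.range j, b i • x i‖ ≤ K * K} with hF
  have hFsub : ∀ m, F (m+1) ⊆ F m :=
    fun m b hb => ⟨hb.1, fun j hj => hb.2 j (le_trans hj (Nat.le_succ m))⟩
  have hFne : ∀ m, (F m).Nonempty :=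
    fun m => ⟨A m, fun i => ⟨(hA1 m i).1, (hA1 m i).2⟩, hA2 m⟩
  have hFclosed : ∀ m, IsClosed (F m) := by
    intro m
    have h1 : IsClosed {b : ℕ → ℝ | ∀ i, b i ∈ Set.Icc (1/K) 1} := by
      have heq : {b : ℕ → ℝ | ∀ i, b i ∈ Set.Icc (1/K) 1}
          = Set.pi Set.univ (fun _ : ℕ => Set.Icc (1/K) 1) := by
        ext b; simp only [Set.mem_setOf_eq, Set.mem_univ_pi]
      rw [heq]
      exact isClosed_set_pi fun i _ => isClosed_Icc
    have h2 : ∀ j : ℕ, IsClosed {b : ℕ → ℝ | ‖∑ i ∈ Finset.range j, b i • x i‖ ≤ K * K} := by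
      intro j
      have hcont : Continuous fun b : ℕ → ℝ => ∑ i ∈ Finset.range j, b i • x i :=
        continuous_finset_sum _ fun i _ => (continuous_apply i).smul continuous_const
      exact isClosed_le hcont.norm continuous_const
    have heq2 : F m = {b : ℕ → ℝ | ∀ i, b i ∈ Set.Icc (1/K) 1}
        ∩ ⋂ (j : ℕ) (_ : j ≤ m), {b : ℕ → ℝ | ‖∑ i ∈ Finset.range j, b i • x i‖ ≤ K * K} := by
      ext b
      simp only [hF, Set.mem_setOf_eq, Set.mem_inter_iff, Set.mem_iInter]
    rw [heq2]
    exact h1.inter (isClosed_iInter fun j => isClosed_iInter fun _ => h2 j)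
  have hF0c : IsCompact (F 0) := by
    refine IsCompact.of_isClosed_subset (isCompact_univ_pi fun _ : ℕ => (isCompact_Icc : IsCompact (Set.Icc (1/K) 1)))
      (hFclosed 0) ?_
    intro b hb
    exact fun i _ => hb.1 i
  obtain ⟨α, hα⟩ := IsCompact.nonempty_iInter_of_sequence_nonempty_isCompact_isClosed
    F hFsub hFne hF0c hFclosed
  have hαm : ∀ m, α ∈ F m := fun m => Set.mem_iInter.mp hα m
  have hαIcc : ∀ i, 1/K ≤ α i ∧ α i ≤ 1 := fun i => (hαm 0).1 i
  have hαbd : ∀ j, ‖∑ i ∈ Finset.range j, α i • x i‖ ≤ K * K := fun j => (hαm j).2 j le_rfl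
  -- the series
  set g : ℕ → ℕ → ℝ := fun n j => if k n ≤ j ∧ j < k (n+1) then α n * c n j else 0 with hg'
  have hg : ∀ n j, g n j ≠ 0 → k n ≤ j ∧ j < k (n+1) := by
    intro n j hne
    by_contra hcon
    exact hne (by simp [hg', hcon])
  have hblock : ∀ n, ∑ j ∈ Finset.Ico (k n) (k (n+1)), g n j • e j = α n • x n := by
    intro n
    rw [hc n, Finset.smul_sum]
    refine Finset.sum_congr rfl fun j hj => ?_
    rw [Finset.mem_Ico] at hj
    simp only [hg', if_pos hj]
    rw [smul_smul]
  have hPSblock : ∀ p, PS e (bseq g) (k p) = ∑ n ∈ Finset.range p, α n • x n := by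
    intro p
    rw [PS_bseq_block hk hg p]
    exact Finset.sum_congr rfl fun n _ => hblock n
  have hCpos : (0:ℝ) < C := lt_of_lt_of_le one_pos hC1
  have hbound : ∀ r, ‖PS e (bseq g) r‖ ≤ K * K + C := by
    intro r
    by_cases hr : r ≤ k 0
    · rw [PS_bseq_zero hk hg hr, norm_zero]
      positivity
    · push_neg at hr
      obtain ⟨p, hp1, hp2⟩ := exists_block hk hr.le
      rw [PS_bseq_mid hk hg hp1 hp2.le]
      have hxa : ‖α p • x p‖ ≤ 1 := by
        rw [norm_smul, hxnorm p, mul_one, Real.norm_eq_abs,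
          abs_of_pos (lt_of_lt_of_le (by positivity) (hαIcc p).1)]
        exact (hαIcc p).2
      have htail : ‖∑ j ∈ Finset.Ico (k p) r, g p j • e j‖ ≤ C := by
        have e1 : PS e (fun j => if k p ≤ j ∧ j < k (p+1) then α p * c p j else 0) r
            = ∑ j ∈ Finset.Ico (k p) r, g p j • e j := by
          rw [PS_window, min_eq_left hp2.le]
          refine Finset.sum_congr rfl fun j hj => ?_
          rw [Finset.mem_Ico] at hj
          have : k p ≤ j ∧ j < k (p+1) := ⟨hj.1, lt_of_lt_of_le hj.2 hp2.le⟩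
          simp [hg', this]
        have e2 : PS e (fun j => if k p ≤ j ∧ j < k (p+1) then α p * c p j else 0) (k (p+1))
            = α p • x p := by
          rw [PS_window, min_self, ← hblock p]
          refine Finset.sum_congr rfl fun j hj => ?_
          rw [Finset.mem_Ico] at hj
          simp [hg', hj]
        have hCC := hC (fun j => if k p ≤ j ∧ j < k (p+1) then α p * c p j else 0)
          r (k (p+1)) hp2.le
        rw [show (∑ i ∈ Finset.range r,
            (if k p ≤ i ∧ i < k (p+1) then α p * c p i else 0) • e i) = PS e _ r from rfl,
          show (∑ i ∈ Finset.range (k (p+1)),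
            (if k p ≤ i ∧ i < k (p+1) then α p * c p i else 0) • e i) = PS e _ (k (p+1)) from rfl,
          e1, e2] at hCC
        calc ‖∑ j ∈ Finset.Ico (k p) r, g p j • e j‖ ≤ C * ‖α p • x p‖ := hCC
          _ ≤ C * 1 := mul_le_mul_of_nonneg_left hxa (le_of_lt hCpos)
          _ = C := mul_one C
      calc ‖PS e (bseq g) (k p) + ∑ j ∈ Finset.Ico (k p) r, g p j • e j‖
          ≤ ‖PS e (bseq g) (k p)‖ + ‖∑ j ∈ Finset.Ico (k p) r, g p j • e j‖ := norm_add_le _ _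
        _ ≤ K * K + C := by
            rw [hPSblock p]
            exact add_le_add (hαbd p) htail
  -- conclude
  intro hBC
  obtain ⟨v, hv⟩ := hBC (bseq g) ⟨K * K + C, fun n => hbound n⟩
  have hvk : Tendsto (fun n => PS e (bseq g) (k n)) atTop (nhds v) :=
    hv.comp hk.tendsto_atTop
  have hsums : Tendsto (fun n => ∑ i ∈ Finset.range n, α i • x i) atTop (nhds v) :=
    hvk.congr fun n => hPSblock n
  have hsums' : Tendsto (fun n => ∑ i ∈ Finset.range (n+1), α i • x i) atTop (nhds v) :=
    hsums.comp (tendsto_add_atTop_nat 1)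
  have hterm : Tendsto (fun n => α n • x n) atTop (nhds 0) := by
    have := hsums'.sub hsums
    rw [sub_self] at this
    refine this.congr fun n => ?_
    rw [Finset.sum_range_succ]
    abel
  obtain ⟨n, hn⟩ := (NormedAddCommGroup.tendsto_nhds_zero.mp hterm (1/K) (by positivity)).exists
  rw [norm_smul, hxnorm n, mul_one, Real.norm_eq_abs,
    abs_of_pos (lt_of_lt_of_le (by positivity) (hαIcc n).1)] at hn
  linarith [(hαIcc n).1]

end Reverse

end NotBCAux

/-- A basis `(e_i)` of a Banach space fails to be boundedly complete iff some
normalized block basis of `(e_i)` is an `ℓ∞⁺-K` sequence of every length, for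
some `K ≥ 1`. -/
theorem not_boundedlyComplete_iff_lInfPlus_blockBasis
    [CompleteSpace X] (e : ℕ → X)
    (hbasis : ∀ v : X, ∃! a : ℕ → ℝ,
      Tendsto (fun n => ∑ i ∈ Finset.range n, a i • e i) atTop (nhds v)) :
    ¬ BoundedlyComplete e ↔
      ∃ K : ℝ, 1 ≤ K ∧ ∃ (k : ℕ → ℕ) (x : ℕ → X), StrictMono k ∧
        (∀ n, x n ∈ Submodule.span ℝ (e '' Set.Ico (k n) (k (n + 1)))) ∧
        (∀ n, ‖x n‖ = 1) ∧
        ∀ m : ℕ, 1 ≤ m → IsLInfPlus K (fun i : Fin m => x (i : ℕ)) := by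
  constructor
  · exact NotBCAux.forward e hbasis
  · rintro ⟨K, hK1, k, x, hk, hspan, hxnorm, hm⟩
    exact NotBCAux.reverse e hbasis K hK1 k x hk hspan hxnorm hm
end

section
/- If T is a tree of order ω² on B_{X₁} \ {0} (the nonzero vectors of the unit ball of the Schreier space X₁), then for any ε > 0 there exist a node (x_i)_{i=1}^n ∈ T and scalars (a_i)_{i=1}^n with ∑|aᵢ| = 1 and ‖∑_{i=1}^n aᵢxᵢ‖_{X₁} < ε. Consequently, there is no ℓ₁-K-tree of order ω² on X₁ for any K, i.e. I(X₁) ≤ ω². -/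
/-- The derived tree of a tree of finite sequences (ordered by extension):
remove all maximal elements. -/
def derivedTree {X : Type*} (T : Set (List X)) : Set (List X) :=
  {l ∈ T | ∃ l' ∈ T, l <+: l' ∧ l ≠ l'}

/-- Transfinite iterates `T^α` of the derivation. -/
noncomputable def derivTreeIter {X : Type*} (T : Set (List X)) : Ordinal → Set (List X) :=
  fun o =>
    Ordinal.limitRecOn o T (fun _ S => derivedTree S)
      (fun o _ ih => ⋂ (β : Ordinal) (h : β < o), ih β h)

/-- The order of a tree: the least `α` with `T^α = ∅`. -/
noncomputable def treeOrder {X : Type*} (T : Set (List X)) : Ordinal :=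
  sInf {o : Ordinal | derivTreeIter T o = ∅}

/-- The Schreier-space norm on finitely supported sequences:
`‖∑ aᵢeᵢ‖ = sup_{E ∈ S₁} |∑_{i∈E} aᵢ|`, where `S₁ = {F : |F| ≤ min F}`.  (For a
finitely supported `a` it suffices to take admissible `E` inside the support.) -/
noncomputable def schNorm (a : ℕ →₀ ℝ) : ℝ :=
  ((a.support.powerset).filter (fun E => ∀ n ∈ E, E.card ≤ n)).sup'
    ⟨∅, by simp⟩ (fun E => |∑ i ∈ E, a i|)

/-- The supremum norm `‖∑ aᵢeᵢ‖_∞ = sup_i |aᵢ|` of a finitely supported sequence. -/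
noncomputable def supNorm (a : ℕ →₀ ℝ) : ℝ :=
  (insert 0 a.support).sup' (Finset.insert_nonempty _ _) (fun i => |a i|)

section TreeLemmas
variable {X : Type*} (T : Set (List X))

lemma derivTreeIter_zero : derivTreeIter T 0 = T := by
  simp [derivTreeIter, Ordinal.limitRecOn_zero]

lemma derivTreeIter_succ (o : Ordinal) :
    derivTreeIter T (Order.succ o) = derivedTree (derivTreeIter T o) := by
  simp [derivTreeIter, Ordinal.limitRecOn_succ]

lemma derivTreeIter_limit (o : Ordinal) (h : Order.IsSuccLimit o) :
    derivTreeIter T o = ⋂ (β : Ordinal) (_ : β < o), derivTreeIter T β := by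
  simp only [derivTreeIter]
  rw [Ordinal.limitRecOn_limit _ _ _ _ h]

lemma derivedTree_subset (S : Set (List X)) : derivedTree S ⊆ S := fun _ h => h.1

lemma derivTreeIter_anti : ∀ β α : Ordinal, α ≤ β →
    derivTreeIter T β ⊆ derivTreeIter T α := by
  intro β
  induction β using Ordinal.induction with
  | _ β IH =>
    intro α hαβ
    rcases eq_or_lt_of_le hαβ with rfl | hlt
    · exact subset_rfl
    rcases Ordinal.zero_or_succ_or_isSuccLimit β with h0 | ⟨b, rfl⟩ | hlim
    · exact absurd (h0 ▸ hlt) (not_lt_of_ge (zero_le (a := α)))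
    · rw [derivTreeIter_succ]
      exact Set.Subset.trans (derivedTree_subset _) (IH b (Order.lt_succ b) α (Order.lt_succ_iff.mp hlt))
    · rw [derivTreeIter_limit T β hlim]
      exact fun x hx => Set.mem_iInter.mp (Set.mem_iInter.mp hx α) hlt

lemma derivTreeIter_subset_self (o : Ordinal) : derivTreeIter T o ⊆ T := by
  have := derivTreeIter_anti T o 0 zero_le
  rwa [derivTreeIter_zero] at this

/-- chain extraction: from a node in the `γ + k` iterate, extend by at least `k` entries
staying in the `γ` iterate. -/
lemma chain_extract : ∀ (k : ℕ) (γ : Ordinal) (l : List X),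
    l ∈ derivTreeIter T (γ + k) →
    ∃ l', l <+: l' ∧ l' ∈ derivTreeIter T γ ∧ l.length + k ≤ l'.length := by
  intro k
  induction k with
  | zero => intro γ l hl; exact ⟨l, List.prefix_refl l, by simpa using hl, by simp⟩
  | succ k IH =>
    intro γ l hl
    have hcast : γ + ((k+1 : ℕ) : Ordinal) = Order.succ (γ + (k : ℕ)) := by
      push_cast
      rw [← add_assoc]
      rfl
    rw [hcast, derivTreeIter_succ] at hl
    obtain ⟨_, l₂, hl₂, hpre, hne⟩ := hl
    have hlen : l.length < l₂.length := by
      rcases lt_or_eq_of_le hpre.length_le with h | h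
      · exact h
      · exact absurd (hpre.eq_of_length h) hne
    obtain ⟨l', hp, hmem, hlen'⟩ := IH γ l₂ hl₂
    exact ⟨l', hpre.trans hp, hmem, by omega⟩
end TreeLemmas

/-- An admissible set (any, not just inside the support) sums to at most the norm. -/
lemma sum_le_schNorm (a : ℕ →₀ ℝ) (E : Finset ℕ) (hE : ∀ n ∈ E, E.card ≤ n) :
    |∑ i ∈ E, a i| ≤ schNorm a := by
  classical
  set E' : Finset ℕ := E ∩ a.support with hE'
  have hsum : ∑ i ∈ E, a i = ∑ i ∈ E', a i := by
    refine (Finset.sum_subset (Finset.inter_subset_left) ?_).symm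
    intro x hx hx'
    by_contra h
    exact hx' (Finset.mem_inter.mpr ⟨hx, Finsupp.mem_support_iff.mpr h⟩)
  rw [hsum]
  refine Finset.le_sup' (f := fun E => |∑ i ∈ E, a i|) ?_
  rw [Finset.mem_filter]
  refine ⟨Finset.mem_powerset.mpr Finset.inter_subset_right, ?_⟩
  intro n hn
  exact le_trans (Finset.card_le_card Finset.inter_subset_left)
    (hE n (Finset.mem_inter.mp hn).1)

lemma schNorm_nonneg (a : ℕ →₀ ℝ) : 0 ≤ schNorm a := by
  have := sum_le_schNorm a ∅ (by simp)
  simpa using this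

lemma admissible_mem_pos {E : Finset ℕ} (hE : ∀ n ∈ E, E.card ≤ n) {j : ℕ} (hj : j ∈ E) :
    1 ≤ j := by
  rcases Nat.eq_zero_or_pos j with rfl | h
  · have := hE 0 hj
    have : E = ∅ := Finset.card_eq_zero.mp (Nat.le_zero.mp this)
    simp [this] at hj
  · exact h

lemma abs_coord_le_schNorm (a : ℕ →₀ ℝ) {j : ℕ} (hj : 1 ≤ j) : |a j| ≤ schNorm a := by
  have := sum_le_schNorm a {j} ?_
  · simpa using this
  · intro n hn
    simp only [Finset.mem_singleton] at hn
    subst hn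
    simpa using hj

/-- Sum over an admissible set of a linear combination is bounded by the weight. -/
lemma sum_E_combo_le (E : Finset ℕ) (hE : ∀ n ∈ E, E.card ≤ n) (s : Finset ℕ)
    (c : ℕ → ℝ) (x : ℕ → ℕ →₀ ℝ) (hx : ∀ i ∈ s, schNorm (x i) ≤ 1) :
    |∑ j ∈ E, (∑ i ∈ s, c i • x i : ℕ →₀ ℝ) j| ≤ ∑ i ∈ s, |c i| := by
  have happ : ∀ j, (∑ i ∈ s, c i • x i : ℕ →₀ ℝ) j = ∑ i ∈ s, c i * x i j := by
    intro j
    rw [Finsupp.finset_sum_apply]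
    simp [Finsupp.smul_apply]
  calc |∑ j ∈ E, (∑ i ∈ s, c i • x i : ℕ →₀ ℝ) j|
      = |∑ i ∈ s, c i * ∑ j ∈ E, x i j| := by
        simp_rw [happ]
        rw [Finset.sum_comm]
        congr 1
        exact Finset.sum_congr rfl (fun i _ => (Finset.mul_sum _ _ _).symm)
    _ ≤ ∑ i ∈ s, |c i * ∑ j ∈ E, x i j| := Finset.abs_sum_le_sum_abs _ _
    _ ≤ ∑ i ∈ s, |c i| := by
        refine Finset.sum_le_sum ?_
        intro i hi
        rw [abs_mul]
        calc |c i| * |∑ j ∈ E, x i j| ≤ |c i| * 1 := by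
              refine mul_le_mul_of_nonneg_left ?_ (abs_nonneg _)
              exact le_trans (sum_le_schNorm _ E hE) (hx i hi)
          _ = |c i| := mul_one _

/-- every finite set of positive naturals has an admissible subset of at least half its size -/
lemma exists_admissible_half (E : Finset ℕ) (h0 : 0 ∉ E) :
    ∃ E' ⊆ E, (∀ n ∈ E', E'.card ≤ n) ∧ E.card ≤ 2 * E'.card := by
  classical
  have hex : ∃ m, (E.filter (fun x => m ≤ x)).card ≤ m := by
    refine ⟨E.sup id + 1, ?_⟩
    have : E.filter (fun x => E.sup id + 1 ≤ x) = ∅ := by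
      refine Finset.filter_eq_empty_iff.mpr ?_
      intro x hx
      have := Finset.le_sup (f := id) hx
      simp only [id] at this
      omega
    rw [this]; simp
  set m₀ := Nat.find hex with hm₀
  have hP : (E.filter (fun x => m₀ ≤ x)).card ≤ m₀ := Nat.find_spec hex
  refine ⟨E.filter (fun x => m₀ ≤ x), Finset.filter_subset _ _, ?_, ?_⟩
  · intro n hn
    have := (Finset.mem_filter.mp hn).2
    omega
  · rcases Nat.eq_zero_or_pos m₀ with h | hpos
    · -- E is empty
      have hE0 : E.card ≤ 0 := by
        have h2 := hP
        rw [h] at h2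
        simpa using h2
      omega
    · have hm : ¬ (E.filter (fun x => (m₀ - 1) ≤ x)).card ≤ m₀ - 1 :=
        Nat.find_min hex (by omega)
      push_neg at hm
      -- filter (m₀-1 ≤) ⊆ insert (m₀-1) (filter (m₀ ≤))
      have hss : E.filter (fun x => (m₀ - 1) ≤ x) ⊆
          insert (m₀ - 1) (E.filter (fun x => m₀ ≤ x)) := by
        intro x hx
        rw [Finset.mem_filter] at hx
        rcases Nat.lt_or_ge x m₀ with h' | h'
        · have : x = m₀ - 1 := by omega
          simp [this]
        · exact Finset.mem_insert_of_mem (Finset.mem_filter.mpr ⟨hx.1, h'⟩)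
      have h1 : m₀ - 1 < (E.filter (fun x => m₀ ≤ x)).card + 1 := by
        have := Finset.card_le_card hss
        have := Finset.card_insert_le (m₀ - 1) (E.filter (fun x => m₀ ≤ x))
        omega
      -- elements below m₀ are in Icc 1 (m₀ - 1)
      have h2 : (E.filter (fun x => ¬ m₀ ≤ x)).card ≤ m₀ - 1 := by
        have hsub : E.filter (fun x => ¬ m₀ ≤ x) ⊆ Finset.Icc 1 (m₀ - 1) := by
          intro x hx
          rw [Finset.mem_filter] at hx
          refine Finset.mem_Icc.mpr ⟨?_, by omega⟩
          rcases Nat.eq_zero_or_pos x with rfl | h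
          · exact absurd hx.1 h0
          · omega
        have := Finset.card_le_card hsub
        rw [Nat.card_Icc] at this
        omega
      have h3 := Finset.card_filter_add_card_filter_not
        (s := E) (p := fun x => m₀ ≤ x)
      omega

noncomputable def heavySet (θ : ℝ) (z : ℕ →₀ ℝ) : Finset ℕ :=
  z.support.filter (fun i => 1 ≤ i ∧ θ < |z i|)

lemma heavySet_one_le {θ : ℝ} {z : ℕ →₀ ℝ} {i : ℕ} (h : i ∈ heavySet θ z) : 1 ≤ i :=
  (Finset.mem_filter.mp h).2.1

lemma abs_le_of_not_heavy {θ : ℝ} (hθ : 0 ≤ θ) {z : ℕ →₀ ℝ} {i : ℕ} (h1 : 1 ≤ i)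
    (h : i ∉ heavySet θ z) : |z i| ≤ θ := by
  by_contra hc
  push_neg at hc
  refine h (Finset.mem_filter.mpr ⟨?_, h1, hc⟩)
  rw [Finsupp.mem_support_iff]
  intro h0
  rw [h0] at hc
  simp at hc
  linarith

lemma heavy_card_le {θ : ℝ} (hθ : 0 < θ) {z : ℕ →₀ ℝ} (hz : schNorm z ≤ 1) :
    ((heavySet θ z).card : ℝ) ≤ 4 / θ := by
  classical
  set Hp := z.support.filter (fun i => 1 ≤ i ∧ θ < z i) with hHp
  set Hn := z.support.filter (fun i => 1 ≤ i ∧ θ < -(z i)) with hHn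
  have hsub : heavySet θ z ⊆ Hp ∪ Hn := by
    intro i hi
    rw [heavySet, Finset.mem_filter] at hi
    obtain ⟨hs, h1, habs⟩ := hi
    rcases lt_abs.mp habs with h | h
    · exact Finset.mem_union_left _ (Finset.mem_filter.mpr ⟨hs, h1, h⟩)
    · exact Finset.mem_union_right _ (Finset.mem_filter.mpr ⟨hs, h1, h⟩)
  have hbound : ∀ (H : Finset ℕ), (∀ i ∈ H, 1 ≤ i) → (∀ i ∈ H, θ ≤ |∑ j ∈ ({i} : Finset ℕ), z j|) →
      True := fun _ _ _ => trivial
  -- bound for the positive part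
  have hp : (Hp.card : ℝ) * θ ≤ 2 := by
    obtain ⟨E', hE'sub, hadm, hcard⟩ := exists_admissible_half Hp (by
      intro h; have := (Finset.mem_filter.mp h).2.1; omega)
    have hsum : (E'.card : ℝ) * θ ≤ ∑ j ∈ E', z j := by
      calc (E'.card : ℝ) * θ = ∑ _j ∈ E', θ := by rw [Finset.sum_const, nsmul_eq_mul]
        _ ≤ ∑ j ∈ E', z j := by
            refine Finset.sum_le_sum ?_
            intro i hi
            exact le_of_lt (Finset.mem_filter.mp (hE'sub hi)).2.2
    have h2 : ∑ j ∈ E', z j ≤ 1 := by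
      have := sum_le_schNorm z E' hadm
      have h3 := le_abs_self (∑ j ∈ E', z j)
      linarith
    have h4 : (Hp.card : ℝ) ≤ 2 * E'.card := by exact_mod_cast hcard
    nlinarith [Nat.cast_nonneg (α := ℝ) E'.card]
  have hn : (Hn.card : ℝ) * θ ≤ 2 := by
    obtain ⟨E', hE'sub, hadm, hcard⟩ := exists_admissible_half Hn (by
      intro h; have := (Finset.mem_filter.mp h).2.1; omega)
    have hsum : (E'.card : ℝ) * θ ≤ -∑ j ∈ E', z j := by
      rw [← Finset.sum_neg_distrib]
      calc (E'.card : ℝ) * θ = ∑ _j ∈ E', θ := by rw [Finset.sum_const, nsmul_eq_mul]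
        _ ≤ ∑ j ∈ E', -(z j) := by
            refine Finset.sum_le_sum ?_
            intro i hi
            exact le_of_lt (Finset.mem_filter.mp (hE'sub hi)).2.2
    have h2 : -∑ j ∈ E', z j ≤ 1 := by
      have := sum_le_schNorm z E' hadm
      have h3 := neg_le_abs (∑ j ∈ E', z j)
      linarith
    have h4 : (Hn.card : ℝ) ≤ 2 * E'.card := by exact_mod_cast hcard
    nlinarith [Nat.cast_nonneg (α := ℝ) E'.card]
  have hcard : ((heavySet θ z).card : ℝ) ≤ (Hp.card : ℝ) + Hn.card := by
    have := Finset.card_le_card hsub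
    have h2 := Finset.card_union_le Hp Hn
    exact_mod_cast le_trans (Nat.cast_le.mpr this) (Nat.cast_le.mpr h2)
  rw [le_div_iff₀ hθ]
  nlinarith

/-- Greedy extraction of pairwise disjoint sets when multiplicities are bounded. -/
lemma greedy_disjoint (f : ℕ → Finset ℕ) (hcap B : ℕ) :
    ∀ (P : ℕ) (F : Finset ℕ),
    (∀ x, (F.filter (fun j => x ∈ f j)).card ≤ B) →
    (∀ i ∈ F, (f i).card ≤ hcap) →
    P * (hcap * B + 1) ≤ F.card →
    ∃ G ⊆ F, G.card = P ∧ ∀ i ∈ G, ∀ j ∈ G, i ≠ j → f i ∩ f j = ∅ := by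
  intro P
  induction P with
  | zero => intro F _ _ _; exact ⟨∅, Finset.empty_subset _, rfl, by simp⟩
  | succ P IH =>
    intro F hmult hcard hsize
    have hne : F.Nonempty := by
      rw [← Finset.card_pos]
      have : 0 < (P+1) * (hcap * B + 1) := Nat.mul_pos (Nat.succ_pos _) (Nat.succ_pos _)
      omega
    obtain ⟨i₀, hi₀⟩ := hne
    classical
    set Bad := F.filter (fun j => (f j ∩ f i₀).Nonempty) with hBad
    have hBadCard : Bad.card ≤ hcap * B := by
      have hsub : Bad ⊆ (f i₀).biUnion (fun x => F.filter (fun j => x ∈ f j)) := by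
        intro j hj
        rw [hBad, Finset.mem_filter] at hj
        obtain ⟨hjF, x, hx⟩ := hj
        rw [Finset.mem_inter] at hx
        exact Finset.mem_biUnion.mpr ⟨x, hx.2, Finset.mem_filter.mpr ⟨hjF, hx.1⟩⟩
      calc Bad.card ≤ ((f i₀).biUnion (fun x => F.filter (fun j => x ∈ f j))).card :=
            Finset.card_le_card hsub
        _ ≤ ∑ x ∈ f i₀, (F.filter (fun j => x ∈ f j)).card := Finset.card_biUnion_le
        _ ≤ ∑ _x ∈ f i₀, B := Finset.sum_le_sum (fun x _ => hmult x)
        _ = (f i₀).card * B := by rw [Finset.sum_const, smul_eq_mul]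
        _ ≤ hcap * B := Nat.mul_le_mul_right _ (hcard i₀ hi₀)
    set F' := F \ insert i₀ Bad with hF'
    have hF'card : P * (hcap * B + 1) ≤ F'.card := by
      rw [hF']
      have h1 : (insert i₀ Bad).card ≤ hcap * B + 1 := by
        have := Finset.card_insert_le i₀ Bad
        omega
      have h2 := Finset.le_card_sdiff (insert i₀ Bad) F
      have hmul : (P+1) * (hcap * B + 1) = P * (hcap * B + 1) + (hcap * B + 1) := by ring
      omega
    obtain ⟨G', hG'sub, hG'card, hG'disj⟩ := IH F'
      (fun x => le_trans (Finset.card_le_card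
        (Finset.filter_subset_filter _ (Finset.sdiff_subset))) (hmult x))
      (fun i hi => hcard i (Finset.sdiff_subset hi))
      hF'card
    have hi₀notin : i₀ ∉ G' := by
      intro h
      have := hG'sub h
      rw [hF', Finset.mem_sdiff] at this
      exact this.2 (Finset.mem_insert_self _ _)
    refine ⟨insert i₀ G', ?_, ?_, ?_⟩
    · exact Finset.insert_subset hi₀ (hG'sub.trans Finset.sdiff_subset)
    · rw [Finset.card_insert_of_notMem hi₀notin, hG'card]
    · intro i hi j hj hij
      have hdisj₀ : ∀ j ∈ G', f i₀ ∩ f j = ∅ := by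
        intro j hj
        have hjF' := hG'sub hj
        rw [hF', Finset.mem_sdiff] at hjF'
        have : j ∉ Bad := fun h => hjF'.2 (Finset.mem_insert_of_mem h)
        rw [hBad, Finset.mem_filter] at this
        push_neg at this
        rw [Finset.inter_comm]
        exact this hjF'.1
      rcases Finset.mem_insert.mp hi with rfl | hi' <;>
        rcases Finset.mem_insert.mp hj with rfl | hj'
      · exact absurd rfl hij
      · exact hdisj₀ _ hj'
      · rw [Finset.inter_comm]; exact hdisj₀ _ hi'
      · exact hG'disj _ hi' _ hj' hij

/-- threshold for the weak sunflower lemma -/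
def sunTh : ℕ → ℕ → ℕ
  | 0, P => P
  | (h+1), P => P * ((h+1) * sunTh h P + 1)

lemma sunTh_ge (h P : ℕ) : P ≤ sunTh h P := by
  induction h with
  | zero => simp [sunTh]
  | succ h IH =>
    simp only [sunTh]
    calc P ≤ P * ((h+1) * sunTh h P + 1) := Nat.le_mul_of_pos_right P (by positivity)
      _ = P * ((h+1) * sunTh h P + 1) := rfl

/-- Weak sunflower lemma: a large family of small finite sets contains `P` members
whose pairwise intersections all lie in a common small set `Y`. -/
lemma weak_sunflower : ∀ (h : ℕ) (P : ℕ) (F : Finset ℕ) (f : ℕ → Finset ℕ),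
    1 ≤ P →
    (∀ i ∈ F, (f i).card ≤ h) →
    sunTh h P ≤ F.card →
    ∃ G ⊆ F, G.card = P ∧ ∃ Y : Finset ℕ, Y ⊆ F.biUnion f ∧ Y.card ≤ h ∧
      ∀ i ∈ G, ∀ j ∈ G, i ≠ j → f i ∩ f j ⊆ Y := by
  intro h
  induction h with
  | zero =>
    intro P F f hP hcard hsize
    have hsize' : P ≤ F.card := by simpa [sunTh] using hsize
    obtain ⟨G, hGsub, hGcard⟩ := Finset.exists_subset_card_eq hsize'
    refine ⟨G, hGsub, hGcard, ∅, Finset.empty_subset _, le_refl _, ?_⟩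
    intro i hi j hj hij
    have : (f i).card ≤ 0 := hcard i (hGsub hi)
    have : f i = ∅ := Finset.card_eq_zero.mp (Nat.le_zero.mp this)
    simp [this]
  | succ h IH =>
    intro P F f hP hcard hsize
    classical
    by_cases hx : ∃ x, sunTh h P ≤ (F.filter (fun i => x ∈ f i)).card
    · obtain ⟨x, hxc⟩ := hx
      set F' := F.filter (fun i => x ∈ f i) with hF'
      obtain ⟨G, hGsub, hGcard, Y', hY'sub, hY'card, hY'⟩ := IH P F' (fun i => (f i).erase x)
        hP
        (by
          intro i hi
          rw [hF', Finset.mem_filter] at hi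
          show ((f i).erase x).card ≤ h
          have h1 := Finset.card_erase_of_mem hi.2
          have h2 := hcard i hi.1
          omega)
        hxc
      have hF'ne : F'.Nonempty := by
        rw [← Finset.card_pos]
        have := sunTh_ge h P
        omega
      refine ⟨G, hGsub.trans (Finset.filter_subset _ _), hGcard, insert x Y', ?_, ?_, ?_⟩
      · refine Finset.insert_subset ?_ ?_
        · obtain ⟨i, hi⟩ := hF'ne
          rw [hF', Finset.mem_filter] at hi
          exact Finset.mem_biUnion.mpr ⟨i, hi.1, hi.2⟩
        · refine hY'sub.trans ?_
          intro y hy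
          obtain ⟨i, hi, hyi⟩ := Finset.mem_biUnion.mp hy
          exact Finset.mem_biUnion.mpr ⟨i, Finset.filter_subset _ _ hi,
            Finset.erase_subset _ _ hyi⟩
      · exact le_trans (Finset.card_insert_le _ _) (by omega)
      · intro i hi j hj hij y hy
        rw [Finset.mem_inter] at hy
        by_cases hyx : y = x
        · simp [hyx]
        · refine Finset.mem_insert_of_mem (hY' i hi j hj hij ?_)
          rw [Finset.mem_inter]
          exact ⟨Finset.mem_erase.mpr ⟨hyx, hy.1⟩, Finset.mem_erase.mpr ⟨hyx, hy.2⟩⟩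
    · push_neg at hx
      obtain ⟨G, hGsub, hGcard, hGdisj⟩ := greedy_disjoint f (h+1) (sunTh h P) P F
        (fun x => le_of_lt (hx x)) hcard
        (by
          have heq : P * ((h+1) * sunTh h P + 1) = sunTh (h+1) P := rfl
          omega)
      exact ⟨G, hGsub, hGcard, ∅, Finset.empty_subset _, by simp,
        fun i hi j hj hij => by rw [hGdisj i hi j hj hij]⟩

noncomputable def netC (γ : ℝ) : ℕ := 2 * ⌈1/γ⌉₊ + 2

lemma floor_bounds {γ a : ℝ} (hγ : 0 < γ) {m : ℤ} (h : ⌊a / γ⌋ = m) :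
    m * γ ≤ a ∧ a < (m + 1) * γ := by
  constructor
  · have := Int.floor_le (a / γ)
    rw [h] at this
    calc (m : ℝ) * γ ≤ (a / γ) * γ := by nlinarith
      _ = a := div_mul_cancel₀ a (ne_of_gt hγ)
  · have := Int.lt_floor_add_one (a / γ)
    rw [h] at this
    push_cast at this
    calc a = (a / γ) * γ := (div_mul_cancel₀ a (ne_of_gt hγ)).symm
      _ < ((m : ℝ) + 1) * γ := by nlinarith

lemma netting (γ : ℝ) (hγ : 0 < γ) :
    ∀ (Y : Finset ℕ) (F : Finset ℕ) (v : ℕ → ℕ →₀ ℝ) (P : ℕ),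
    (∀ i ∈ F, ∀ y ∈ Y, |v i y| ≤ 1) →
    P * (netC γ) ^ Y.card ≤ F.card →
    ∃ G ⊆ F, P ≤ G.card ∧ ∀ i ∈ G, ∀ j ∈ G, ∀ y ∈ Y, |v i y - v j y| ≤ γ := by
  classical
  intro Y
  induction Y using Finset.induction_on with
  | empty =>
    intro F v P _ hsize
    exact ⟨F, subset_rfl, by simpa using hsize, by simp⟩
  | @insert y Y hyY IH =>
    intro F v P hbdd hsize
    set b : ℤ := ⌊(1:ℝ)/γ⌋ with hb
    have hbnn : 0 ≤ b := Int.floor_nonneg.mpr (by positivity)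
    set t : Finset ℤ := Finset.Icc (-b - 1) b with ht
    have htne : t.Nonempty := ⟨b, by rw [ht, Finset.mem_Icc]; omega⟩
    have htcard : t.card ≤ netC γ := by
      rw [ht, Int.card_Icc]
      have h1 : (b : ℝ) ≤ 1/γ := Int.floor_le _
      have h2 : (1:ℝ)/γ ≤ (⌈1/γ⌉₊ : ℝ) := Nat.le_ceil _
      have h3 : b ≤ (⌈1/γ⌉₊ : ℤ) := by exact_mod_cast le_trans h1 h2
      rw [netC]
      omega
    have hmaps : ∀ i ∈ F, ⌊v i y / γ⌋ ∈ t := by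
      intro i hi
      have habs := hbdd i hi y (Finset.mem_insert_self _ _)
      have hle : v i y ≤ 1 := le_trans (le_abs_self _) habs
      have hge : -1 ≤ v i y := by have := neg_abs_le (v i y); linarith
      rw [ht, Finset.mem_Icc]
      refine ⟨?_, ?_⟩
      · rw [Int.le_floor]
        push_cast
        have h1 : ((1:ℝ)/γ) < (b : ℝ) + 1 := Int.lt_floor_add_one _
        have h2 : -((1:ℝ)/γ) ≤ v i y / γ := by
          rw [← neg_div]
          exact (div_le_div_iff_of_pos_right hγ).mpr hge
        linarith
      · refine le_trans (Int.floor_le_floor ?_) (le_refl b)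
        exact (div_le_div_iff_of_pos_right hγ).mpr hle
    obtain ⟨m, hmt, hfiber⟩ := Finset.exists_le_card_fiber_of_mul_le_card_of_maps_to
      hmaps htne (by
        calc t.card * (P * (netC γ) ^ Y.card) ≤ netC γ * (P * (netC γ) ^ Y.card) :=
              Nat.mul_le_mul_right _ htcard
          _ = P * (netC γ) ^ (insert y Y).card := by
              rw [Finset.card_insert_of_notMem hyY, pow_succ]
              ring
          _ ≤ F.card := hsize)
    set F₁ := F.filter (fun i => ⌊v i y / γ⌋ = m) with hF₁
    obtain ⟨G, hGsub, hGcard, hGclose⟩ := IH F₁ v P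
      (fun i hi z hz => hbdd i (Finset.filter_subset _ _ hi) z (Finset.mem_insert_of_mem hz))
      hfiber
    refine ⟨G, hGsub.trans (Finset.filter_subset _ _), hGcard, ?_⟩
    intro i hi j hj z hz
    rcases Finset.mem_insert.mp hz with rfl | hz'
    · have hiF₁ := hGsub hi
      have hjF₁ := hGsub hj
      rw [hF₁, Finset.mem_filter] at hiF₁ hjF₁
      obtain ⟨hi1, hi2⟩ := floor_bounds hγ hiF₁.2
      obtain ⟨hj1, hj2⟩ := floor_bounds hγ hjF₁.2
      rw [abs_sub_le_iff]
      constructor <;> nlinarith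
    · exact hGclose i hi j hj z hz'

/-- The gadget lemma: any sufficiently long finite sequence in the ball of the Schreier
space admits an absolutely convex combination that is uniformly small in every
coordinate `≥ 1`. -/
lemma gadget (η : ℝ) (hη : 0 < η) :
    ∃ N : ℕ, 1 ≤ N ∧ ∀ (s : ℕ) (z : ℕ → ℕ →₀ ℝ),
    (∀ i ∈ Finset.Ico s (s+N), schNorm (z i) ≤ 1) →
    ∃ c : ℕ → ℝ,
      (∀ i, c i ≠ 0 → i ∈ Finset.Ico s (s+N)) ∧
      (∑ i ∈ Finset.Ico s (s+N), |c i| = 1) ∧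
      ∀ j : ℕ, 1 ≤ j → |(∑ i ∈ Finset.Ico s (s+N), c i • z i : ℕ →₀ ℝ) j| ≤ η := by
  classical
  set θ : ℝ := η/4 with hθdef
  have hθ : 0 < θ := by positivity
  set hh : ℕ := ⌊(16:ℝ)/η⌋₊ with hhdef
  set k : ℕ := ⌈1/η⌉₊ + 1 with hkdef
  have hk1 : 1 ≤ k := by omega
  set γ : ℝ := η with hγdef
  set P : ℕ := 2 * k with hPdef
  set P₁ : ℕ := P * (netC γ) ^ hh with hP₁def
  have hnetC1 : 1 ≤ netC γ := by rw [netC]; omega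
  have hP1 : 1 ≤ P := by omega
  have hP₁1 : 1 ≤ P₁ := by
    rw [hP₁def]
    exact Nat.one_le_iff_ne_zero.mpr (Nat.mul_ne_zero (by omega) (by positivity))
  refine ⟨sunTh hh P₁, le_trans hP₁1 (sunTh_ge _ _), ?_⟩
  intro s z hball
  set N := sunTh hh P₁ with hNdef
  set F := Finset.Ico s (s+N) with hFdef
  set f : ℕ → Finset ℕ := fun i => heavySet θ (z i) with hfdef
  have hcap : ∀ i ∈ F, (f i).card ≤ hh := by
    intro i hi
    have := heavy_card_le hθ (hball i hi)
    rw [hhdef]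
    refine Nat.le_floor ?_
    refine le_trans this (le_of_eq ?_)
    rw [hθdef]
    rw [div_div_eq_mul_div]
    norm_num
  have hFcard : sunTh hh P₁ ≤ F.card := by rw [hFdef, Nat.card_Ico]; omega
  obtain ⟨G, hGF, hGcard, Y, hYsub, hYcard, hYinter⟩ :=
    weak_sunflower hh P₁ F f hP₁1 hcap hFcard
  -- coordinates in Y are ≥ 1 and all vectors are bounded there
  have hYpos : ∀ y ∈ Y, 1 ≤ y := by
    intro y hy
    obtain ⟨i, _, hyi⟩ := Finset.mem_biUnion.mp (hYsub hy)
    exact heavySet_one_le hyi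
  obtain ⟨G', hG'G, hG'card, hG'close⟩ := netting γ hη Y G z P
    (fun i hi y hy => le_trans (abs_coord_le_schNorm _ (hYpos y hy)) (hball i (hGF hi)))
    (by
      rw [hGcard, hP₁def]
      exact Nat.mul_le_mul_left P (Nat.pow_le_pow_right hnetC1 hYcard))
  obtain ⟨G'', hG''sub, hG''card⟩ := Finset.exists_subset_card_eq hG'card
  rw [hPdef] at hG''card
  obtain ⟨A, hAsub, hAcard⟩ := Finset.exists_subset_card_eq
    (show k ≤ G''.card by omega)
  set B := G'' \ A with hBdef
  have hBcard : B.card = k := by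
    rw [hBdef, Finset.card_sdiff_of_subset hAsub, hG''card, hAcard]
    omega
  have hABdisj : Disjoint A B := Finset.disjoint_sdiff
  have hABunion : A ∪ B = G'' := by
    rw [hBdef, Finset.union_sdiff_of_subset hAsub]
  set c : ℕ → ℝ := fun i => if i ∈ A then (1/(2*k) : ℝ) else if i ∈ B then -(1/(2*k)) else 0
    with hcdef
  have hcsupp : ∀ i, c i ≠ 0 → i ∈ F := by
    intro i hci
    simp only [hcdef] at hci
    by_cases hiA : i ∈ A
    · exact hGF (hG'G (hG''sub (hABunion ▸ Finset.mem_union_left _ hiA)))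
    · by_cases hiB : i ∈ B
      · exact hGF (hG'G (hG''sub (hABunion ▸ Finset.mem_union_right _ hiB)))
      · simp [hiA, hiB] at hci
  have hk2 : ((2:ℝ) * k) ≠ 0 := by
    have : (0:ℝ) < k := by exact_mod_cast hk1
    positivity
  have hG''F : G'' ⊆ F := hG''sub.trans (hG'G.trans hGF)
  have habs : ∀ i, |c i| = if i ∈ G'' then (1/(2*k) : ℝ) else 0 := by
    intro i
    simp only [hcdef]
    by_cases hiA : i ∈ A
    · rw [if_pos hiA, if_pos (hABunion ▸ Finset.mem_union_left _ hiA)]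
      rw [abs_of_pos]
      positivity
    · by_cases hiB : i ∈ B
      · rw [if_neg hiA, if_pos hiB, if_pos (hABunion ▸ Finset.mem_union_right _ hiB), abs_neg]
        rw [abs_of_pos]
        positivity
      · have : i ∉ G'' := by
          rw [← hABunion]
          intro h
          rcases Finset.mem_union.mp h with h | h
          exacts [hiA h, hiB h]
        rw [if_neg hiA, if_neg hiB, if_neg this, abs_zero]
  have hcsum : ∑ i ∈ F, |c i| = 1 := by
    calc ∑ i ∈ F, |c i| = ∑ i ∈ F, (if i ∈ G'' then (1/(2*k) : ℝ) else 0) :=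
          Finset.sum_congr rfl (fun i _ => habs i)
      _ = ∑ i ∈ G'', (1/(2*k) : ℝ) := by
          rw [Finset.sum_ite_mem, Finset.inter_eq_right.mpr hG''F]
      _ = (G''.card : ℝ) * (1/(2*k)) := by rw [Finset.sum_const, nsmul_eq_mul]
      _ = 1 := by
          rw [hG''card]
          push_cast
          field_simp
  refine ⟨c, hcsupp, hcsum, ?_⟩
  intro j hj
  -- evaluate the combination at coordinate j
  have happ : (∑ i ∈ F, c i • z i : ℕ →₀ ℝ) j = ∑ i ∈ F, c i * z i j := by
    rw [Finsupp.finset_sum_apply]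
    simp [Finsupp.smul_apply]
  have hsplit : ∑ i ∈ F, c i * z i j
      = (1/(2*k)) * (∑ i ∈ A, z i j - ∑ i ∈ B, z i j) := by
    have h1 : ∑ i ∈ F, c i * z i j = ∑ i ∈ G'', c i * z i j := by
      refine (Finset.sum_subset hG''F ?_).symm
      intro i _ hiG''
      have : |c i| = 0 := by rw [habs i, if_neg hiG'']
      rw [abs_eq_zero.mp this, zero_mul]
    have h2 : ∑ i ∈ G'', c i * z i j = ∑ i ∈ A, c i * z i j + ∑ i ∈ B, c i * z i j := by
      rw [← hABunion, Finset.sum_union hABdisj]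
    have h3 : ∑ i ∈ A, c i * z i j = (1/(2*k)) * ∑ i ∈ A, z i j := by
      rw [Finset.mul_sum]
      refine Finset.sum_congr rfl ?_
      intro i hi
      simp only [hcdef]
      simp only [if_pos hi]
    have h4 : ∑ i ∈ B, c i * z i j = -((1/(2*k)) * ∑ i ∈ B, z i j) := by
      rw [Finset.mul_sum, ← Finset.sum_neg_distrib]
      refine Finset.sum_congr rfl ?_
      intro i hi
      have hiA : i ∉ A := (Finset.mem_sdiff.mp (hBdef ▸ hi)).2
      simp only [hcdef]
      simp only [if_neg hiA, if_pos hi]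
      ring
    rw [h1, h2, h3, h4]
    ring
  rw [happ, hsplit]
  have hkpos : (0:ℝ) < (k:ℝ) := by exact_mod_cast hk1
  have hfrac : (0:ℝ) < 1/(2*k) := by positivity
  by_cases hjY : j ∈ Y
  · -- coordinates in the core: all values are γ-close, and |A| = |B|
    obtain ⟨i₀, hi₀A⟩ : A.Nonempty := Finset.card_pos.mp (by omega)
    have hAG' : A ⊆ G' := hAsub.trans hG''sub
    have hBG' : B ⊆ G' := (hBdef ▸ Finset.sdiff_subset).trans hG''sub
    have hclose : ∀ i ∈ G'', |z i j - z i₀ j| ≤ γ :=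
      fun i hi => hG'close i (hG''sub hi) i₀ (hAG' hi₀A) j hjY
    have hdiff : ∑ i ∈ A, z i j - ∑ i ∈ B, z i j
        = ∑ i ∈ A, (z i j - z i₀ j) - ∑ i ∈ B, (z i j - z i₀ j) := by
      rw [Finset.sum_sub_distrib, Finset.sum_sub_distrib]
      rw [Finset.sum_const, Finset.sum_const, hAcard, hBcard]
      ring
    rw [hdiff]
    have hA1 : |∑ i ∈ A, (z i j - z i₀ j)| ≤ (k:ℝ) * γ := by
      refine le_trans (Finset.abs_sum_le_sum_abs _ _) ?_
      calc ∑ i ∈ A, |z i j - z i₀ j| ≤ ∑ _i ∈ A, γ :=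
            Finset.sum_le_sum (fun i hi => hclose i (hAsub hi))
        _ = (k:ℝ) * γ := by rw [Finset.sum_const, hAcard, nsmul_eq_mul]
    have hB1 : |∑ i ∈ B, (z i j - z i₀ j)| ≤ (k:ℝ) * γ := by
      refine le_trans (Finset.abs_sum_le_sum_abs _ _) ?_
      calc ∑ i ∈ B, |z i j - z i₀ j| ≤ ∑ _i ∈ B, γ :=
            Finset.sum_le_sum (fun i hi => hclose i (Finset.sdiff_subset hi))
        _ = (k:ℝ) * γ := by rw [Finset.sum_const, hBcard, nsmul_eq_mul]
    calc |1/(2*(k:ℝ)) * (∑ i ∈ A, (z i j - z i₀ j) - ∑ i ∈ B, (z i j - z i₀ j))|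
        = (1/(2*k)) * |∑ i ∈ A, (z i j - z i₀ j) - ∑ i ∈ B, (z i j - z i₀ j)| := by
          rw [abs_mul, abs_of_pos hfrac]
      _ ≤ (1/(2*k)) * ((k:ℝ) * γ + (k:ℝ) * γ) := by
          refine mul_le_mul_of_nonneg_left ?_ (le_of_lt hfrac)
          calc |∑ i ∈ A, (z i j - z i₀ j) - ∑ i ∈ B, (z i j - z i₀ j)|
              ≤ |∑ i ∈ A, (z i j - z i₀ j)| + |∑ i ∈ B, (z i j - z i₀ j)| := abs_sub _ _
            _ ≤ (k:ℝ) * γ + (k:ℝ) * γ := add_le_add hA1 hB1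
      _ = γ := by
          have hkne : (k:ℝ) ≠ 0 := ne_of_gt hkpos
          field_simp
          ring
      _ ≤ η := le_of_eq hγdef
  · -- coordinates outside the core: at most one heavy vector
    set SS := G''.filter (fun i => j ∈ heavySet θ (z i)) with hSSdef
    have hSS1 : SS.card ≤ 1 := by
      rw [Finset.card_le_one]
      intro a ha b hb
      by_contra hab
      have haS := Finset.mem_filter.mp (hSSdef ▸ ha)
      have hbS := Finset.mem_filter.mp (hSSdef ▸ hb)
      have : j ∈ Y := hYinter a (hG'G (hG''sub haS.1)) b (hG'G (hG''sub hbS.1)) hab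
        (Finset.mem_inter.mpr ⟨haS.2, hbS.2⟩)
      exact hjY this
    have hsumabs : ∑ i ∈ G'', |z i j| ≤ 1 + (2*k:ℝ) * θ := by
      have hsplit2 : ∑ i ∈ G'', |z i j| = ∑ i ∈ SS, |z i j| + ∑ i ∈ G'' \ SS, |z i j| := by
        rw [← Finset.sum_union (Finset.disjoint_sdiff), Finset.union_sdiff_of_subset]
        exact Finset.filter_subset _ _
      rw [hsplit2]
      have hS1 : ∑ i ∈ SS, |z i j| ≤ 1 := by
        calc ∑ i ∈ SS, |z i j| ≤ ∑ _i ∈ SS, (1:ℝ) := by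
              refine Finset.sum_le_sum ?_
              intro i hi
              exact le_trans (abs_coord_le_schNorm _ hj)
                (hball i (hG''F (Finset.mem_filter.mp (hSSdef ▸ hi)).1))
          _ = (SS.card : ℝ) := by rw [Finset.sum_const, nsmul_eq_mul, mul_one]
          _ ≤ 1 := by exact_mod_cast hSS1
      have hS2 : ∑ i ∈ G'' \ SS, |z i j| ≤ (2*k:ℝ) * θ := by
        calc ∑ i ∈ G'' \ SS, |z i j| ≤ ∑ _i ∈ G'' \ SS, θ := by
              refine Finset.sum_le_sum ?_
              intro i hi
              have hmem := Finset.mem_sdiff.mp hi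
              have : j ∉ heavySet θ (z i) := by
                intro h
                exact hmem.2 (Finset.mem_filter.mpr ⟨hmem.1, h⟩)
              exact abs_le_of_not_heavy (le_of_lt hθ) hj this
          _ = ((G'' \ SS).card : ℝ) * θ := by rw [Finset.sum_const, nsmul_eq_mul]
          _ ≤ (2*k:ℝ) * θ := by
              refine mul_le_mul_of_nonneg_right ?_ (le_of_lt hθ)
              have := Finset.card_le_card (Finset.sdiff_subset (s := G'') (t := SS))
              rw [hG''card] at this
              exact_mod_cast this
      linarith
    calc |1/(2*(k:ℝ)) * (∑ i ∈ A, z i j - ∑ i ∈ B, z i j)|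
        = (1/(2*k)) * |∑ i ∈ A, z i j - ∑ i ∈ B, z i j| := by
          rw [abs_mul, abs_of_pos hfrac]
      _ ≤ (1/(2*k)) * (1 + (2*k:ℝ) * θ) := by
          refine mul_le_mul_of_nonneg_left ?_ (le_of_lt hfrac)
          calc |∑ i ∈ A, z i j - ∑ i ∈ B, z i j|
              ≤ |∑ i ∈ A, z i j| + |∑ i ∈ B, z i j| := abs_sub _ _
            _ ≤ ∑ i ∈ A, |z i j| + ∑ i ∈ B, |z i j| :=
                add_le_add (Finset.abs_sum_le_sum_abs _ _) (Finset.abs_sum_le_sum_abs _ _)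
            _ = ∑ i ∈ G'', |z i j| := by
                rw [← hABunion, Finset.sum_union hABdisj]
            _ ≤ 1 + (2*k:ℝ) * θ := hsumabs
      _ = 1/(2*k) + θ := by field_simp
      _ ≤ η := by
          have hck : (1:ℝ)/η ≤ (k:ℝ) := by
            calc (1:ℝ)/η ≤ (⌈1/η⌉₊ : ℝ) := Nat.le_ceil _
              _ ≤ (k:ℝ) := by rw [hkdef]; push_cast; rw [hγdef]; norm_num
          have h1 : 1/(2*(k:ℝ)) ≤ η/2 := by
            rw [div_le_div_iff₀ (by positivity) (by norm_num)]
            rw [div_le_iff₀ hη] at hck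
            nlinarith
          rw [hθdef, hγdef]
          linarith

/-- prefix lists agree in their common range -/
lemma prefix_getD {l l' : List (ℕ →₀ ℝ)} (h : l <+: l') {i : ℕ} (hi : i < l.length) :
    l.getD i 0 = l'.getD i 0 := by
  obtain ⟨r, rfl⟩ := h
  rw [List.getD_eq_getElem?_getD, List.getD_eq_getElem?_getD]
  rw [List.getElem?_append_left hi]

/-- The recursive multi-level construction. -/
lemma rec_levels (T : Set (List (ℕ →₀ ℝ))) (hball : ∀ l ∈ T, ∀ x ∈ l, schNorm x ≤ 1)
    (δ : ℝ) (hδ : 0 < δ) :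
    ∀ t : ℕ, ∀ l ∈ derivTreeIter T (Ordinal.omega0 * t), ∀ R : ℕ,
    ∃ l', l <+: l' ∧ l' ∈ T ∧ ∃ c : ℕ → ℝ,
      (∀ i, c i ≠ 0 → l.length ≤ i ∧ i < l'.length) ∧
      (∑ i ∈ Finset.Ico l.length l'.length, |c i| = (t : ℝ)) ∧
      (∀ E : Finset ℕ, (∀ n ∈ E, E.card ≤ n) →
        (E.card ≤ R →
          |∑ j ∈ E, (∑ i ∈ Finset.Ico l.length l'.length, c i • l'.getD i 0 : ℕ →₀ ℝ) j|
            ≤ t * δ) ∧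
        |∑ j ∈ E, (∑ i ∈ Finset.Ico l.length l'.length, c i • l'.getD i 0 : ℕ →₀ ℝ) j|
          ≤ 1 + t * δ) := by
  intro t
  induction t with
  | zero =>
    intro l hl R
    have hlT : l ∈ T := by
      rw [← derivTreeIter_zero T]
      have : Ordinal.omega0 * (0:ℕ) = 0 := by simp
      rwa [this] at hl
    refine ⟨l, List.prefix_refl l, hlT, fun _ => 0, by simp, by simp, ?_⟩
    intro E hE
    simp
  | succ t IH =>
    intro l hl R
    set η : ℝ := δ / (R + 1) with hηdef
    have hη : 0 < η := by positivity
    obtain ⟨N, hN1, hgadget⟩ := gadget η hη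
    -- extract a chain of length N inside the ω·t iterate
    have hl' : l ∈ derivTreeIter T (Ordinal.omega0 * t + N) := by
      refine derivTreeIter_anti T (Ordinal.omega0 * (t+1 : ℕ)) _ ?_ hl
      have : (Ordinal.omega0 : Ordinal) * ((t:ℕ)+1 : ℕ) = Ordinal.omega0 * t + Ordinal.omega0 := by
        push_cast
        rw [mul_add, mul_one]
      rw [this]
      exact add_le_add_right (le_of_lt (Ordinal.nat_lt_omega0 N)) _
    obtain ⟨l₁, hpre₁, hl₁, hlen₁⟩ := chain_extract T N (Ordinal.omega0 * t) l hl'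
    have hl₁T : l₁ ∈ T := by
      rw [← derivTreeIter_zero T]
      exact derivTreeIter_anti T _ 0 zero_le hl₁
    -- the new vectors
    set z : ℕ → ℕ →₀ ℝ := fun i => l₁.getD i 0 with hzdef
    have hzball : ∀ i ∈ Finset.Ico l.length (l.length + N), schNorm (z i) ≤ 1 := by
      intro i hi
      rw [Finset.mem_Ico] at hi
      have hilt : i < l₁.length := by omega
      refine hball l₁ hl₁T _ ?_
      rw [hzdef]
      simp only
      rw [List.getD_eq_getElem l₁ 0 hilt]
      exact List.getElem_mem hilt
    obtain ⟨c₁, hc₁supp, hc₁sum, hc₁coord⟩ := hgadget l.length z hzball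
    -- bound on the support of the gadget vector
    set R₁ : ℕ := max R ((Finset.Ico l.length (l.length + N)).sup (fun i => (z i).support.sup id))
      with hR₁def
    -- recurse
    obtain ⟨l', hpre₂, hl'T, c₂, hc₂supp, hc₂sum, hc₂bound⟩ := IH l₁ hl₁ R₁
    set c : ℕ → ℝ := fun i => if i < l₁.length then c₁ i else c₂ i with hcdef
    have hlen_le : l.length ≤ l₁.length := hpre₁.length_le
    have hlen_le' : l₁.length ≤ l'.length := hpre₂.length_le
    have hNlen : l.length + N ≤ l₁.length := hlen₁
    -- support of c
    have hcsupp : ∀ i, c i ≠ 0 → l.length ≤ i ∧ i < l'.length := by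
      intro i hci
      rw [hcdef] at hci
      simp only at hci
      by_cases hi : i < l₁.length
      · rw [if_pos hi] at hci
        have := hc₁supp i hci
        rw [Finset.mem_Ico] at this
        omega
      · rw [if_neg hi] at hci
        have := hc₂supp i hci
        omega
    -- abbreviations
    set IcoN := Finset.Ico l.length (l.length + N) with hIcoN
    set Ico1 := Finset.Ico l.length l₁.length with hIco1
    set Ico2 := Finset.Ico l₁.length l'.length with hIco2
    have hIcoNsub : IcoN ⊆ Ico1 := by
      rw [hIcoN, hIco1]
      exact Finset.Ico_subset_Ico (le_refl _) hNlen
    set g : ℕ →₀ ℝ := ∑ i ∈ IcoN, c₁ i • z i with hgdef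
    -- the part of the final vector coming from this level equals the gadget vector
    have hg' : ∑ i ∈ Ico1, c i • l'.getD i 0 = g := by
      rw [hgdef]
      have h1 : ∀ i ∈ Ico1, c i • l'.getD i 0 = c₁ i • z i := by
        intro i hi
        rw [hIco1, Finset.mem_Ico] at hi
        have hil₁ : i < l₁.length := hi.2
        rw [hcdef]
        simp only [if_pos hil₁]
        rw [hzdef]
        simp only
        rw [← prefix_getD hpre₂ hil₁]
      rw [Finset.sum_congr rfl h1]
      refine (Finset.sum_subset hIcoNsub ?_).symm
      intro i _ hiN
      have : c₁ i = 0 := by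
        by_contra h
        exact hiN (hIcoN ▸ hc₁supp i h)
      rw [this, zero_smul]
    have hv₂ : ∑ i ∈ Ico2, c i • l'.getD i 0 = ∑ i ∈ Ico2, c₂ i • l'.getD i 0 := by
      refine Finset.sum_congr rfl ?_
      intro i hi
      rw [hIco2, Finset.mem_Ico] at hi
      rw [hcdef]
      simp only [if_neg (by omega : ¬ i < l₁.length)]
    have hvsplit : (∑ i ∈ Finset.Ico l.length l'.length, c i • l'.getD i 0 : ℕ →₀ ℝ)
        = g + ∑ i ∈ Ico2, c₂ i • l'.getD i 0 := by
      rw [← Finset.sum_Ico_consecutive _ hlen_le hlen_le']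
      rw [← hIco1, ← hIco2, hg', hv₂]
    -- the coefficient sum
    have hcsum : ∑ i ∈ Finset.Ico l.length l'.length, |c i| = ((t+1 : ℕ) : ℝ) := by
      rw [← Finset.sum_Ico_consecutive _ hlen_le hlen_le', ← hIco1, ← hIco2]
      have h1 : ∑ i ∈ Ico1, |c i| = 1 := by
        have he : ∀ i ∈ Ico1, |c i| = |c₁ i| := by
          intro i hi
          rw [hIco1, Finset.mem_Ico] at hi
          rw [hcdef]
          simp only [if_pos hi.2]
        rw [Finset.sum_congr rfl he]
        rw [← hc₁sum]
        refine (Finset.sum_subset hIcoNsub ?_).symm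
        intro i _ hiN
        have : c₁ i = 0 := by
          by_contra h
          exact hiN (hIcoN ▸ hc₁supp i h)
        rw [this, abs_zero]
      have h2 : ∑ i ∈ Ico2, |c i| = (t : ℝ) := by
        have he : ∀ i ∈ Ico2, |c i| = |c₂ i| := by
          intro i hi
          rw [hIco2, Finset.mem_Ico] at hi
          rw [hcdef]
          simp only [if_neg (by omega : ¬ i < l₁.length)]
        rw [Finset.sum_congr rfl he, hc₂sum]
      rw [h1, h2]
      push_cast
      ring
    refine ⟨l', hpre₁.trans hpre₂, hl'T, c, hcsupp, hcsum, ?_⟩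
    intro E hE
    -- split the evaluation
    have hEsplit : ∀ (j : ℕ),
        (∑ i ∈ Finset.Ico l.length l'.length, c i • l'.getD i 0 : ℕ →₀ ℝ) j
        = g j + (∑ i ∈ Ico2, c₂ i • l'.getD i 0 : ℕ →₀ ℝ) j := by
      intro j
      rw [hvsplit]
      rfl
    have hsumsplit : ∑ j ∈ E, (∑ i ∈ Finset.Ico l.length l'.length, c i • l'.getD i 0 : ℕ →₀ ℝ) j
        = ∑ j ∈ E, g j + ∑ j ∈ E, (∑ i ∈ Ico2, c₂ i • l'.getD i 0 : ℕ →₀ ℝ) j := by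
      rw [← Finset.sum_add_distrib]
      exact Finset.sum_congr rfl (fun j _ => hEsplit j)
    have hEcard_le : ∀ j ∈ E, E.card ≤ j := fun j hj => hE j hj
    obtain ⟨hrec1, hrec2⟩ := hc₂bound E hE
    have hδR : (R : ℝ) * η ≤ δ := by
      rw [hηdef]
      rw [div_eq_mul_inv, ← mul_assoc]
      rw [← div_eq_mul_inv, div_le_iff₀ (by positivity)]
      nlinarith [Nat.cast_nonneg (α := ℝ) R]
    constructor
    · -- E.card ≤ R case
      intro hcard
      have hg_small : |∑ j ∈ E, g j| ≤ (R : ℝ) * η := by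
        calc |∑ j ∈ E, g j| ≤ ∑ j ∈ E, |g j| := Finset.abs_sum_le_sum_abs _ _
          _ ≤ ∑ _j ∈ E, η := by
              refine Finset.sum_le_sum ?_
              intro j hj
              have hj1 : 1 ≤ j := admissible_mem_pos hE hj
              exact hc₁coord j hj1
          _ = (E.card : ℝ) * η := by rw [Finset.sum_const, nsmul_eq_mul]
          _ ≤ (R : ℝ) * η := by
              refine mul_le_mul_of_nonneg_right ?_ (le_of_lt hη)
              exact_mod_cast hcard
      have hrec_small := hrec1 (le_trans hcard (le_max_left _ _))
      rw [hsumsplit]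
      calc |∑ j ∈ E, g j + ∑ j ∈ E, (∑ i ∈ Ico2, c₂ i • l'.getD i 0 : ℕ →₀ ℝ) j|
          ≤ |∑ j ∈ E, g j| + |∑ j ∈ E, (∑ i ∈ Ico2, c₂ i • l'.getD i 0 : ℕ →₀ ℝ) j| :=
            abs_add_le _ _
        _ ≤ (R : ℝ) * η + t * δ := add_le_add hg_small hrec_small
        _ ≤ (t+1 : ℕ) * δ := by
            push_cast
            have hexp : ((t:ℝ)+1)*δ = (t:ℝ)*δ + δ := by ring
            linarith
    · -- general bound
      by_cases hcase : ∃ j ∈ E, j ≤ R₁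
      · obtain ⟨j₀, hj₀E, hj₀⟩ := hcase
        have hcard : E.card ≤ R₁ := le_trans (hE j₀ hj₀E) hj₀
        have hrec_small := hrec1 hcard
        have hg_le : |∑ j ∈ E, g j| ≤ 1 := by
          rw [hgdef]
          exact le_trans (sum_E_combo_le E hE IcoN c₁ z hzball) (le_of_eq hc₁sum)
        rw [hsumsplit]
        calc |∑ j ∈ E, g j + ∑ j ∈ E, (∑ i ∈ Ico2, c₂ i • l'.getD i 0 : ℕ →₀ ℝ) j|
            ≤ |∑ j ∈ E, g j| + |∑ j ∈ E, (∑ i ∈ Ico2, c₂ i • l'.getD i 0 : ℕ →₀ ℝ) j| :=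
              abs_add_le _ _
          _ ≤ 1 + ((t : ℝ) * δ) := add_le_add hg_le hrec_small
          _ ≤ 1 + (t+1 : ℕ) * δ := by
              push_cast
              have hexp : ((t:ℝ)+1)*δ = (t:ℝ)*δ + δ := by ring
              linarith
      · push_neg at hcase
        have hg_zero : ∀ j ∈ E, g j = 0 := by
          intro j hj
          have hjR₁ : R₁ < j := hcase j hj
          rw [hgdef, Finsupp.finset_sum_apply]
          refine Finset.sum_eq_zero ?_
          intro i hi
          rw [Finsupp.smul_apply]
          have hz0 : z i j = 0 := by
            by_contra h
            have hjsupp : j ∈ (z i).support := Finsupp.mem_support_iff.mpr h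
            have h1 : j ≤ (z i).support.sup id := Finset.le_sup (f := id) hjsupp
            have h2 : (z i).support.sup id ≤
                IcoN.sup (fun i => (z i).support.sup id) :=
              Finset.le_sup (f := fun i => (z i).support.sup id) hi
            have h3 : IcoN.sup (fun i => (z i).support.sup id) ≤ R₁ := by
              rw [hR₁def]
              exact le_max_right _ _
            omega
          rw [hz0, smul_zero]
        have hgsum_zero : ∑ j ∈ E, g j = 0 := Finset.sum_eq_zero hg_zero
        rw [hsumsplit, hgsum_zero, zero_add]
        calc |∑ j ∈ E, (∑ i ∈ Ico2, c₂ i • l'.getD i 0 : ℕ →₀ ℝ) j| ≤ 1 + (t : ℝ) * δ := hrec2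
          _ ≤ 1 + (t+1 : ℕ) * δ := by
              push_cast
              have hexp : ((t:ℝ)+1)*δ = (t:ℝ)*δ + δ := by ring
              linarith

/-- The core theorem: on any tree all of whose `ω·n` iterates are nonempty, with all
entries in the unit ball of the Schreier space, there are nodes with absolutely convex
combinations of arbitrarily small Schreier norm. -/
theorem core_small_combination (T : Set (List (ℕ →₀ ℝ)))
    (hball : ∀ l ∈ T, ∀ x ∈ l, schNorm x ≤ 1)
    (hiter : ∀ n : ℕ, (derivTreeIter T (Ordinal.omega0 * n)).Nonempty)
    (ε : ℝ) (hε : 0 < ε) :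
    ∃ l ∈ T, ∃ a : Fin l.length → ℝ,
      (∑ i, |a i| = 1) ∧ schNorm (∑ i, a i • l.get i) < ε := by
  classical
  set n : ℕ := ⌈2/ε⌉₊ + 1 with hndef
  have hn1 : 1 ≤ n := by omega
  have hnpos : (0:ℝ) < n := by exact_mod_cast hn1
  have hnε : 2/ε < (n:ℝ) := by
    calc (2:ℝ)/ε ≤ (⌈2/ε⌉₊ : ℝ) := Nat.le_ceil _
      _ < (n:ℝ) := by rw [hndef]; push_cast; norm_num
  have h2n : 2/(n:ℝ) < ε := by
    rw [div_lt_iff₀ hnpos]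
    rw [div_lt_iff₀ hε] at hnε
    nlinarith
  set δ : ℝ := 1/(n:ℝ) with hδdef
  have hδ : 0 < δ := by positivity
  obtain ⟨l₀, hl₀⟩ := hiter n
  obtain ⟨l', hpre, hl'T, c, hcsupp, hcsum, hbound⟩ := rec_levels T hball δ hδ n l₀ hl₀ 0
  have hlen0 : l₀.length ≤ l'.length := hpre.length_le
  refine ⟨l', hl'T, fun i => c i.val / n, ?_, ?_⟩
  · -- the weights sum to 1
    have h1 : ∑ i : Fin l'.length, |c i.val / (n:ℝ)|
        = ∑ i ∈ Finset.range l'.length, |c i / n| := by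
      exact Fin.sum_univ_eq_sum_range (fun i => |c i / n|) l'.length
    rw [h1]
    have h2 : ∑ i ∈ Finset.range l'.length, |c i / (n:ℝ)|
        = ∑ i ∈ Finset.Ico l₀.length l'.length, |c i / n| := by
      rw [Finset.range_eq_Ico]
      refine (Finset.sum_subset (Finset.Ico_subset_Ico (Nat.zero_le _) (le_refl _)) ?_).symm
      intro i hi hi'
      rw [Finset.mem_Ico] at hi hi'
      have : c i = 0 := by
        by_contra h
        have := hcsupp i h
        omega
      rw [this]
      simp
    rw [h2]
    have h3 : ∀ i, |c i / (n:ℝ)| = |c i| / n := by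
      intro i
      rw [abs_div, abs_of_pos hnpos]
    simp_rw [h3]
    rw [← Finset.sum_div, hcsum]
    field_simp
  · -- the norm is small
    set v : ℕ →₀ ℝ := ∑ i ∈ Finset.Ico l₀.length l'.length, c i • l'.getD i 0 with hvdef
    have hw : (∑ i : Fin l'.length, (c i.val / (n:ℝ)) • l'.get i : ℕ →₀ ℝ)
        = (n:ℝ)⁻¹ • v := by
      have h0 : ∀ i : Fin l'.length,
          (c i.val / (n:ℝ)) • l'.get i = (c i.val / (n:ℝ)) • l'.getD i.val 0 := by
        intro i
        congr 1
        rw [List.getD_eq_getElem l' 0 i.isLt]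
        exact List.get_eq_getElem
      have h1 : (∑ i : Fin l'.length, (c i.val / (n:ℝ)) • l'.get i : ℕ →₀ ℝ)
          = ∑ i ∈ Finset.range l'.length, (c i / (n:ℝ)) • l'.getD i 0 := by
        rw [Finset.sum_congr rfl (fun i _ => h0 i)]
        exact Fin.sum_univ_eq_sum_range (fun i => (c i / (n:ℝ)) • l'.getD i 0) l'.length
      have h2 : (∑ i ∈ Finset.range l'.length, (c i / (n:ℝ)) • l'.getD i 0 : ℕ →₀ ℝ)
          = ∑ i ∈ Finset.Ico l₀.length l'.length, (c i / (n:ℝ)) • l'.getD i 0 := by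
        rw [Finset.range_eq_Ico]
        refine (Finset.sum_subset (Finset.Ico_subset_Ico (Nat.zero_le _) (le_refl _)) ?_).symm
        intro i hi hi'
        rw [Finset.mem_Ico] at hi hi'
        have : c i = 0 := by
          by_contra h
          have := hcsupp i h
          omega
        rw [this]
        simp
      have h3 : (∑ i ∈ Finset.Ico l₀.length l'.length, (c i / (n:ℝ)) • l'.getD i 0 : ℕ →₀ ℝ)
          = (n:ℝ)⁻¹ • v := by
        rw [hvdef, Finset.smul_sum]
        refine Finset.sum_congr rfl ?_
        intro i _
        rw [smul_smul]
        congr 1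
        rw [div_eq_inv_mul]
      rw [h1, h2, h3]
    have hkey : schNorm (∑ i : Fin l'.length, (c i.val / (n:ℝ)) • l'.get i) < ε := by
      rw [hw]
      rw [schNorm]
      refine (Finset.sup'_lt_iff _).mpr ?_
      intro E hEmem
      rw [Finset.mem_filter] at hEmem
      have hadm := hEmem.2
      have hval : ∑ j ∈ E, ((n:ℝ)⁻¹ • v) j = (n:ℝ)⁻¹ * ∑ j ∈ E, v j := by
        rw [Finset.mul_sum]
        refine Finset.sum_congr rfl ?_
        intro j _
        rw [Finsupp.smul_apply, smul_eq_mul]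
      rw [hval, abs_mul, abs_of_pos (by positivity : (0:ℝ) < (n:ℝ)⁻¹)]
      have hb := (hbound E hadm).2
      have hδn : 1 + (n:ℝ) * δ = 2 := by
        rw [hδdef]
        field_simp
        norm_num
      rw [hδn] at hb
      calc ((n:ℝ))⁻¹ * |∑ j ∈ E, v j| ≤ (n:ℝ)⁻¹ * 2 := by
            refine mul_le_mul_of_nonneg_left hb ?_
            positivity
        _ = 2 / n := by rw [div_eq_inv_mul, mul_comm] -- check
        _ < ε := h2n
    exact hkey

lemma omega_mul_nat_lt (n : ℕ) : Ordinal.omega0 * n < Ordinal.omega0 * Ordinal.omega0 :=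
  mul_lt_mul_of_pos_left (Ordinal.nat_lt_omega0 n) Ordinal.omega0_pos

/-- On the Schreier space `X₁`: any tree of order `ω²` on `B_{X₁} \ {0}` has a
node admitting an absolutely convex combination of arbitrarily small norm;
consequently every `ℓ₁-K`-tree on `X₁` has order `< ω²`, i.e. `I(X₁) ≤ ω²`. -/
theorem no_l1_tree_of_order_omega_sq_on_schreier :
    (∀ T : Set (List (ℕ →₀ ℝ)),
      (∀ l ∈ T, ∀ x ∈ l, schNorm x ≤ 1 ∧ x ≠ 0) →
      treeOrder T = Ordinal.omega0 * Ordinal.omega0 →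
      ∀ ε > (0 : ℝ), ∃ l ∈ T, ∃ a : Fin l.length → ℝ,
        (∑ i, |a i| = 1) ∧ schNorm (∑ i, a i • l.get i) < ε) ∧
    (∀ K : ℝ, 1 ≤ K → ∀ T : Set (List (ℕ →₀ ℝ)),
      (∀ l ∈ T, (∀ x ∈ l, schNorm x = 1) ∧
        ∀ a : Fin l.length → ℝ,
          (1 / K) * ∑ i, |a i| ≤ schNorm (∑ i, a i • l.get i)) →
      treeOrder T < Ordinal.omega0 * Ordinal.omega0) := by
  constructor
  · intro T hball hord ε hε
    refine core_small_combination T (fun l hl x hx => (hball l hl x hx).1) ?_ ε hε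
    intro n
    by_contra hempty
    rw [Set.not_nonempty_iff_eq_empty] at hempty
    have hle : treeOrder T ≤ Ordinal.omega0 * n := csInf_le' hempty
    rw [hord] at hle
    exact absurd (lt_of_le_of_lt hle (omega_mul_nat_lt n)) (lt_irrefl _)
  · intro K hK T hT
    by_contra hord
    push_neg at hord
    have hball : ∀ l ∈ T, ∀ x ∈ l, schNorm x ≤ 1 :=
      fun l hl x hx => le_of_eq ((hT l hl).1 x hx)
    have hKpos : (0:ℝ) < K := lt_of_lt_of_le one_pos hK
    have hεpos : (0:ℝ) < 1/(2*K) := by positivity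
    have hiter : ∀ n : ℕ, (derivTreeIter T (Ordinal.omega0 * n)).Nonempty := by
      intro n
      by_contra hempty
      rw [Set.not_nonempty_iff_eq_empty] at hempty
      have hle : treeOrder T ≤ Ordinal.omega0 * n := csInf_le' hempty
      exact absurd (lt_of_le_of_lt hle (omega_mul_nat_lt n)) (not_lt.mpr hord)
    obtain ⟨l, hlT, a, hasum, hanorm⟩ :=
      core_small_combination T hball hiter (1/(2*K)) hεpos
    have hlow := (hT l hlT).2 a
    rw [hasum, mul_one] at hlow
    have : (1:ℝ)/K < 1/(2*K) := lt_of_le_of_lt hlow hanorm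
    rw [div_lt_div_iff₀ (by positivity) (by positivity)] at this
    nlinarith
end
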